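/- arXiv:1504.05176 — 3 statements merged into one kernel-verified Lean document; each statement's English description precedes it below -/
import Mathlib

section
/- For two integer partitions λ and μ, the two sets {ν : μ ≺ ν and ν' ≺ λ'} and {ν : μ' ≺ ν' and ν ≺ λ} are simultaneously nonempty if and only if μ ⊆ λ and the skew shape λ/μ contains no 2×2 square; moreover in that case both sets have the same cardinality 2^C, where C is the number of connected components of λ/μ. -/
open scoped Classical

/-- An integer partition: a nonincreasing sequence of nonnegative integers, eventually zero. -/
structure IntPartition where
  f : ℕ → ℕ
  antitone : ∀ i j : ℕ, i ≤ j → f j ≤ f i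
  eventually_zero : ∃ N : ℕ, ∀ n : ℕ, N ≤ n → f n = 0

/-- `InterF f g` means `f ≻ g`, i.e. `f 0 ≥ g 0 ≥ f 1 ≥ g 1 ≥ ⋯` (0-indexed). -/
def InterF (f g : ℕ → ℕ) : Prop := ∀ i : ℕ, g i ≤ f i ∧ f (i + 1) ≤ g i

/-- `conjF f i` is the `(i+1)`-st part of the conjugate partition: the number of `j` with `f j ≥ i+1`. -/
noncomputable def conjF (f : ℕ → ℕ) (i : ℕ) : ℕ := Set.ncard {j : ℕ | i + 1 ≤ f j}

/-- The size `|f| = Σ f i` of a partition. -/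
noncomputable def sizeF (f : ℕ → ℕ) : ℕ := ∑ᶠ i : ℕ, f i

/-- The empty partition. -/
def emptyP : IntPartition := ⟨fun _ => 0, fun _ _ _ => le_rfl, ⟨0, fun _ _ => rfl⟩⟩

/-- The set of cells (row, column), 0-indexed, of the skew shape `λ/μ`. -/
def skewCells (lam mu : IntPartition) : Set (ℕ × ℕ) :=
  {c : ℕ × ℕ | mu.f c.1 ≤ c.2 ∧ c.2 < lam.f c.1}

/-- Edge-adjacency of cells. -/
def cellAdj (c d : ℕ × ℕ) : Prop :=
  (c.1 = d.1 ∧ (c.2 + 1 = d.2 ∨ d.2 + 1 = c.2)) ∨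
    (c.2 = d.2 ∧ (c.1 + 1 = d.1 ∨ d.1 + 1 = c.1))

/-- The adjacency graph of the cells of the skew shape `λ/μ`. -/
def skewGraph (lam mu : IntPartition) : SimpleGraph (skewCells lam mu) where
  Adj c d := cellAdj c.1 d.1
  symm := ⟨by rintro ⟨c, _⟩ ⟨d, _⟩ h; unfold cellAdj at *; omega⟩
  loopless := ⟨by rintro ⟨c, _⟩ h; unfold cellAdj at h; omega⟩

/-- `λ/μ` contains no 2×2 square. -/
def noTwoByTwo (lam mu : IntPartition) : Prop :=
  ¬ ∃ i j : ℕ, (i, j) ∈ skewCells lam mu ∧ (i, j + 1) ∈ skewCells lam mu ∧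
      (i + 1, j) ∈ skewCells lam mu ∧ (i + 1, j + 1) ∈ skewCells lam mu

/-- The set `{ν : μ ≺ ν and ν' ≺ λ'}`. -/
def S1 (lam mu : IntPartition) : Set IntPartition :=
  {ν : IntPartition | InterF ν.f mu.f ∧ InterF (conjF lam.f) (conjF ν.f)}

/-- The set `{ν : μ' ≺ ν' and ν ≺ λ}`. -/
def S2 (lam mu : IntPartition) : Set IntPartition :=
  {ν : IntPartition | InterF (conjF ν.f) (conjF mu.f) ∧ InterF lam.f ν.f}

/-! ### Auxiliary lemmas -/

lemma part_ext {a b : IntPartition} (h : a.f = b.f) : a = b := by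
  cases a; cases b; cases h; rfl

lemma anti_of_step {f : ℕ → ℕ} (h : ∀ i, f (i + 1) ≤ f i) : ∀ i j, i ≤ j → f j ≤ f i := by
  intro i j hij
  induction hij with
  | refl => exact le_rfl
  | step _ ih => exact le_trans (h _) ih

lemma dc_eq {S : Set ℕ} (hS : S.Finite) (hd : ∀ a b : ℕ, a ≤ b → b ∈ S → a ∈ S) :
    S = Set.Iio S.ncard := by
  have hio : ∀ n : ℕ, (Set.Iio n).ncard = n := by
    intro n; rw [← Finset.coe_Iio, Set.ncard_coe_finset, Nat.card_Iio]
  ext k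
  simp only [Set.mem_Iio]
  constructor
  · intro hk
    have hsub : Set.Iio (k + 1) ⊆ S := fun a ha => hd a k (Nat.lt_succ_iff.mp ha) hk
    have := Set.ncard_le_ncard hsub hS
    rw [hio] at this; omega
  · intro hk
    by_contra hns
    have hsub : S ⊆ Set.Iio k := by
      intro b hb
      simp only [Set.mem_Iio]
      by_contra hbk
      exact hns (hd k b (by omega) hb)
    have := Set.ncard_le_ncard hsub (Set.finite_Iio k)
    rw [hio] at this; omega

/-! ### Conjugate partition lemmas -/

def Aset (f : ℕ → ℕ) (t : ℕ) : Set ℕ := {j | t + 1 ≤ f j}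

lemma Aset_finite {f : ℕ → ℕ} (hz : ∃ N, ∀ n, N ≤ n → f n = 0) (t : ℕ) : (Aset f t).Finite := by
  obtain ⟨N, hN⟩ := hz
  apply (Set.finite_Iio N).subset
  intro j hj
  simp only [Set.mem_Iio]
  by_contra h
  have h2 := hN j (by omega)
  have h3 : t + 1 ≤ f j := hj
  omega

lemma Aset_eq {f : ℕ → ℕ} (ha : ∀ i j, i ≤ j → f j ≤ f i) (hz : ∃ N, ∀ n, N ≤ n → f n = 0)
    (t : ℕ) : Aset f t = Set.Iio (conjF f t) :=
  dc_eq (Aset_finite hz t) (fun a b hab hb => le_trans hb (ha a b hab))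

lemma conj_mono_iff (p q : IntPartition) :
    (∀ i, conjF q.f i ≤ conjF p.f i) ↔ ∀ j, q.f j ≤ p.f j := by
  constructor
  · intro h j
    by_contra hc
    push_neg at hc
    have hq : j ∈ Aset q.f (p.f j) := by
      show p.f j + 1 ≤ q.f j; omega
    rw [Aset_eq q.antitone q.eventually_zero] at hq
    have hp : j ∈ Set.Iio (conjF p.f (p.f j)) :=
      Set.mem_Iio.mpr (lt_of_lt_of_le (Set.mem_Iio.mp hq) (h _))
    rw [← Aset_eq p.antitone p.eventually_zero] at hp
    have : p.f j + 1 ≤ p.f j := hp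
    omega
  · intro h i
    apply Set.ncard_le_ncard _ (Aset_finite p.eventually_zero i)
    intro j hj
    exact le_trans hj (h j)

lemma conj_step_iff (p q : IntPartition) :
    (∀ i, conjF p.f (i + 1) ≤ conjF q.f i) ↔ ∀ j, p.f j ≤ q.f j + 1 := by
  constructor
  · intro h j
    by_contra hc
    push_neg at hc
    have hq : j ∈ Aset p.f (q.f j + 1) := by
      show q.f j + 1 + 1 ≤ p.f j; omega
    rw [Aset_eq p.antitone p.eventually_zero] at hq
    have hp : j ∈ Set.Iio (conjF q.f (q.f j)) :=
      Set.mem_Iio.mpr (lt_of_lt_of_le (Set.mem_Iio.mp hq) (h _))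
    rw [← Aset_eq q.antitone q.eventually_zero] at hp
    have : q.f j + 1 ≤ q.f j := hp
    omega
  · intro h i
    apply Set.ncard_le_ncard _ (Aset_finite q.eventually_zero i)
    intro j hj
    have h2 := h j
    have h3 : i + 1 + 1 ≤ p.f j := hj
    show i + 1 ≤ q.f j
    omega

/-! ### Membership characterizations -/

lemma mem_S1 {lam mu ν : IntPartition} :
    ν ∈ S1 lam mu ↔ (∀ i, mu.f i ≤ ν.f i ∧ ν.f (i + 1) ≤ mu.f i) ∧
      (∀ i, ν.f i ≤ lam.f i) ∧ (∀ i, lam.f i ≤ ν.f i + 1) := by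
  show (InterF ν.f mu.f ∧ InterF (conjF lam.f) (conjF ν.f)) ↔ _
  unfold InterF
  constructor
  · rintro ⟨h1, h2⟩
    exact ⟨h1, (conj_mono_iff lam ν).mp (fun i => (h2 i).1),
      (conj_step_iff lam ν).mp (fun i => (h2 i).2)⟩
  · rintro ⟨h1, h2, h3⟩
    exact ⟨h1, fun i => ⟨(conj_mono_iff lam ν).mpr h2 i, (conj_step_iff lam ν).mpr h3 i⟩⟩

lemma mem_S2 {lam mu ν : IntPartition} :
    ν ∈ S2 lam mu ↔ (∀ i, mu.f i ≤ ν.f i) ∧ (∀ i, ν.f i ≤ mu.f i + 1) ∧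
      (∀ i, ν.f i ≤ lam.f i ∧ lam.f (i + 1) ≤ ν.f i) := by
  show (InterF (conjF ν.f) (conjF mu.f) ∧ InterF lam.f ν.f) ↔ _
  unfold InterF
  constructor
  · rintro ⟨h1, h2⟩
    exact ⟨(conj_mono_iff ν mu).mp (fun i => (h1 i).1),
      (conj_step_iff ν mu).mp (fun i => (h1 i).2), h2⟩
  · rintro ⟨h1, h2, h3⟩
    exact ⟨fun i => ⟨(conj_mono_iff ν mu).mpr h1 i, (conj_step_iff ν mu).mpr h2 i⟩, h3⟩

/-! ### no 2x2 characterization -/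

lemma no2_iff {lam mu : IntPartition} : noTwoByTwo lam mu ↔ ∀ i, lam.f (i + 1) ≤ mu.f i + 1 := by
  constructor
  · intro h i
    by_contra hc
    push_neg at hc
    have ha := mu.antitone i (i + 1) (by omega)
    have hb := lam.antitone i (i + 1) (by omega)
    exact h ⟨i, mu.f i, ⟨by dsimp; omega, by dsimp; omega⟩, ⟨by dsimp; omega, by dsimp; omega⟩,
      ⟨by dsimp; omega, by dsimp; omega⟩, ⟨by dsimp; omega, by dsimp; omega⟩⟩
  · rintro h ⟨i, j, c1, c2, c3, c4⟩
    have h1 : mu.f i ≤ j ∧ j < lam.f i := c1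
    have h4 : mu.f (i + 1) ≤ j + 1 ∧ j + 1 < lam.f (i + 1) := c4
    have := h i
    omega

/-! ### Nonemptiness -/

lemma nonempty_of (lam mu : IntPartition) (hsub : ∀ i, mu.f i ≤ lam.f i)
    (hstep : ∀ i, lam.f (i + 1) ≤ mu.f i + 1) :
    (S1 lam mu).Nonempty ∧ (S2 lam mu).Nonempty := by
  obtain ⟨N, hN⟩ := lam.eventually_zero
  obtain ⟨M, hM⟩ := mu.eventually_zero
  constructor
  · refine ⟨⟨fun i => max (mu.f i) (lam.f i - 1), anti_of_step ?_, ⟨N + M, ?_⟩⟩, ?_⟩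
    · intro i
      have h1 := mu.antitone i (i + 1) (by omega)
      have h2 := hstep i
      have h3 := hsub i
      omega
    · intro n hn
      show max (mu.f n) (lam.f n - 1) = 0
      have := hN n (by omega)
      have := hM n (by omega)
      omega
    · rw [mem_S1]
      dsimp only
      refine ⟨fun i => ⟨by omega, ?_⟩, fun i => ?_, fun i => ?_⟩
      · have h1 := mu.antitone i (i + 1) (by omega)
        have h2 := hstep i
        omega
      · have := hsub i; omega
      · omega
  · refine ⟨⟨fun i => min (mu.f i + 1) (lam.f i), anti_of_step ?_, ⟨N, ?_⟩⟩, ?_⟩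
    · intro i
      have h2 := hstep i
      have h3 := lam.antitone i (i + 1) (by omega)
      have h4 := hsub (i + 1)
      omega
    · intro n hn
      show min (mu.f n + 1) (lam.f n) = 0
      have := hN n (by omega)
      omega
    · rw [mem_S2]
      dsimp only
      refine ⟨fun i => ?_, fun i => ?_, fun i => ⟨?_, ?_⟩⟩
      · have := hsub i; omega
      · omega
      · omega
      · have h2 := hstep i
        have h3 := lam.antitone i (i + 1) (by omega)
        omega

/-! ### Rows and the component invariant -/

def topR (lam mu : IntPartition) (i : ℕ) : Prop :=
  mu.f i < lam.f i ∧ ∀ k, i = k + 1 → lam.f i ≤ mu.f k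

def botR (lam mu : IntPartition) (i : ℕ) : Prop :=
  mu.f i < lam.f i ∧ lam.f (i + 1) ≤ mu.f i

noncomputable def hfun (lam mu : IntPartition) (i : ℕ) : ℕ :=
  ((Finset.range i).filter (fun k => ¬ mu.f k < lam.f (k + 1))).card

lemma hfun_mono (lam mu : IntPartition) {i j : ℕ} (h : i ≤ j) : hfun lam mu i ≤ hfun lam mu j :=
  Finset.card_le_card (Finset.filter_subset_filter _ (Finset.range_subset_range.mpr h))

lemma hfun_succ_eq (lam mu : IntPartition) {k : ℕ} (h : mu.f k < lam.f (k + 1)) :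
    hfun lam mu (k + 1) = hfun lam mu k := by
  unfold hfun
  rw [Finset.range_add_one, Finset.filter_insert, if_neg (by simpa using h)]

lemma hfun_succ_lt (lam mu : IntPartition) {k : ℕ} (h : ¬ mu.f k < lam.f (k + 1)) :
    hfun lam mu k < hfun lam mu (k + 1) := by
  unfold hfun
  rw [Finset.range_add_one, Finset.filter_insert, if_pos h,
    Finset.card_insert_of_notMem (by simp)]
  omega

lemma hfun_adj (lam mu : IntPartition) {c d : skewCells lam mu}
    (h : (skewGraph lam mu).Adj c d) : hfun lam mu c.1.1 = hfun lam mu d.1.1 := by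
  obtain ⟨⟨i, j⟩, hc⟩ := c
  obtain ⟨⟨i', j'⟩, hd⟩ := d
  have h' : cellAdj (i, j) (i', j') := h
  have hc' : mu.f i ≤ j ∧ j < lam.f i := hc
  have hd' : mu.f i' ≤ j' ∧ j' < lam.f i' := hd
  dsimp only
  unfold cellAdj at h'
  dsimp only at h'
  rcases h' with ⟨h1, _⟩ | ⟨h1, h2 | h2⟩
  · rw [h1]
  · subst h2
    exact (hfun_succ_eq lam mu (by omega)).symm
  · subst h2
    exact hfun_succ_eq lam mu (by omega)

lemma hfun_reach (lam mu : IntPartition) {c d : skewCells lam mu}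
    (h : (skewGraph lam mu).Reachable c d) : hfun lam mu c.1.1 = hfun lam mu d.1.1 := by
  obtain ⟨p⟩ := h
  induction p with
  | nil => rfl
  | cons hadj _ ih => exact (hfun_adj lam mu hadj).trans ih

/-! ### Reachability constructions -/

lemma adj_mk (lam mu : IntPartition) {c d : ℕ × ℕ} (hc : c ∈ skewCells lam mu)
    (hd : d ∈ skewCells lam mu) (h : cellAdj c d) :
    (skewGraph lam mu).Adj ⟨c, hc⟩ ⟨d, hd⟩ := h

lemma reach_row (lam mu : IntPartition) : ∀ (i j d : ℕ) (h1 : (i, j) ∈ skewCells lam mu)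
    (h2 : (i, j + d) ∈ skewCells lam mu),
    (skewGraph lam mu).Reachable ⟨(i, j), h1⟩ ⟨(i, j + d), h2⟩ := by
  intro i j d
  induction d with
  | zero => intro h1 h2; exact SimpleGraph.Reachable.refl _
  | succ d ih =>
    intro h1 h2
    have h1' : mu.f i ≤ j ∧ j < lam.f i := h1
    have h2' : mu.f i ≤ j + (d + 1) ∧ j + (d + 1) < lam.f i := h2
    have h3 : (i, j + d) ∈ skewCells lam mu := ⟨by dsimp; omega, by dsimp; omega⟩
    exact (ih h1 h3).trans
      (adj_mk lam mu h3 h2 (Or.inl ⟨rfl, Or.inl rfl⟩)).reachable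

lemma reach_row' (lam mu : IntPartition) (i j j' : ℕ) (h1 : (i, j) ∈ skewCells lam mu)
    (h2 : (i, j') ∈ skewCells lam mu) :
    (skewGraph lam mu).Reachable ⟨(i, j), h1⟩ ⟨(i, j'), h2⟩ := by
  rcases le_total j j' with h | h
  · obtain ⟨d, rfl⟩ := Nat.le.dest h
    exact reach_row lam mu i j d h1 h2
  · obtain ⟨d, rfl⟩ := Nat.le.dest h
    exact (reach_row lam mu i j' d h2 h1).symm

lemma reach_top (lam mu : IntPartition) : ∀ i j (h : (i, j) ∈ skewCells lam mu),
    ∃ t, ∃ ht : topR lam mu t, ∃ hc : (t, mu.f t) ∈ skewCells lam mu,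
      (skewGraph lam mu).Reachable ⟨(i, j), h⟩ ⟨(t, mu.f t), hc⟩ := by
  intro i
  induction i using Nat.strong_induction_on with
  | _ i ih =>
    intro j h
    have hm : mu.f i ≤ j ∧ j < lam.f i := h
    by_cases htop : ∀ k, i = k + 1 → lam.f i ≤ mu.f k
    · have hc : (i, mu.f i) ∈ skewCells lam mu := ⟨by dsimp; omega, by dsimp; omega⟩
      exact ⟨i, ⟨by omega, htop⟩, hc, reach_row' lam mu i j (mu.f i) h hc⟩
    · push_neg at htop
      obtain ⟨k, hik, hlt⟩ := htop
      have hA : (k, mu.f k) ∈ skewCells lam mu :=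
        ⟨le_rfl, lt_of_lt_of_le hlt (lam.antitone k i (by omega))⟩
      have hB : (i, mu.f k) ∈ skewCells lam mu :=
        ⟨mu.antitone k i (by omega), hlt⟩
      obtain ⟨t, ht, hct, hr⟩ := ih k (by omega) (mu.f k) hA
      refine ⟨t, ht, hct, (reach_row' lam mu i j (mu.f k) h hB).trans
        ((adj_mk lam mu hB hA (Or.inr ⟨rfl, Or.inr hik.symm⟩)).reachable.trans hr)⟩

lemma reach_bot (lam mu : IntPartition) (N : ℕ) (hN : ∀ n, N ≤ n → lam.f n = 0) :
    ∀ m i j (_ : N ≤ i + m) (h : (i, j) ∈ skewCells lam mu),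
    ∃ t, ∃ ht : botR lam mu t, ∃ hc : (t, mu.f t) ∈ skewCells lam mu,
      (skewGraph lam mu).Reachable ⟨(i, j), h⟩ ⟨(t, mu.f t), hc⟩ := by
  intro m
  induction m with
  | zero =>
    intro i j hfuel h
    have hm : mu.f i ≤ j ∧ j < lam.f i := h
    have := hN i (by omega)
    omega
  | succ m ih =>
    intro i j hfuel h
    have hm : mu.f i ≤ j ∧ j < lam.f i := h
    by_cases hb : lam.f (i + 1) ≤ mu.f i
    · have hc : (i, mu.f i) ∈ skewCells lam mu := ⟨by dsimp; omega, by dsimp; omega⟩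
      exact ⟨i, ⟨by omega, hb⟩, hc, reach_row' lam mu i j (mu.f i) h hc⟩
    · push_neg at hb
      have hA : (i, mu.f i) ∈ skewCells lam mu := ⟨by dsimp; omega, by dsimp; omega⟩
      have hB : (i + 1, mu.f i) ∈ skewCells lam mu :=
        ⟨mu.antitone i (i + 1) (by omega), hb⟩
      obtain ⟨t, ht, hct, hr⟩ := ih (i + 1) (mu.f i) (by omega) hB
      exact ⟨t, ht, hct, (reach_row' lam mu i j (mu.f i) h hA).trans
        ((adj_mk lam mu hA hB (Or.inr ⟨rfl, Or.inl rfl⟩)).reachable.trans hr)⟩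

/-! ### Component counting -/

lemma key_hfun (lam mu : IntPartition) {u v : ℕ} (hv : ∀ k, v = k + 1 → lam.f v ≤ mu.f k)
    (huv : u < v) : hfun lam mu u < hfun lam mu v := by
  obtain ⟨w, rfl⟩ : ∃ w, v = w + 1 := ⟨v - 1, by omega⟩
  have hnl : ¬ mu.f w < lam.f (w + 1) := by
    have := hv w rfl; omega
  exact lt_of_le_of_lt (hfun_mono lam mu (by omega)) (hfun_succ_lt lam mu hnl)

lemma card_comp_top (lam mu : IntPartition) :
    Nat.card (skewGraph lam mu).ConnectedComponent = Nat.card {i // topR lam mu i} := by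
  refine (Nat.card_congr (Equiv.ofBijective (fun t : {i // topR lam mu i} =>
    (skewGraph lam mu).connectedComponentMk ⟨(t.1, mu.f t.1), ⟨le_rfl, t.2.1⟩⟩)
    ⟨?_, ?_⟩)).symm
  · intro a b hab
    have hr := (SimpleGraph.ConnectedComponent.eq).mp hab
    have hh : hfun lam mu a.1 = hfun lam mu b.1 := hfun_reach lam mu hr
    ext
    by_contra hne
    rcases Nat.lt_or_ge a.1 b.1 with h | h
    · exact absurd hh (Nat.ne_of_lt (key_hfun lam mu b.2.2 h))
    · exact absurd hh.symm (Nat.ne_of_lt (key_hfun lam mu a.2.2 (by omega)))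
  · intro c
    obtain ⟨⟨⟨i, j⟩, h⟩, rfl⟩ := c.exists_rep
    obtain ⟨t, ht, hc, hr⟩ := reach_top lam mu i j h
    exact ⟨⟨t, ht⟩, SimpleGraph.ConnectedComponent.eq.mpr hr.symm⟩

lemma card_comp_bot (lam mu : IntPartition) :
    Nat.card (skewGraph lam mu).ConnectedComponent = Nat.card {i // botR lam mu i} := by
  obtain ⟨N, hN⟩ := lam.eventually_zero
  refine (Nat.card_congr (Equiv.ofBijective (fun t : {i // botR lam mu i} =>
    (skewGraph lam mu).connectedComponentMk ⟨(t.1, mu.f t.1), ⟨le_rfl, t.2.1⟩⟩)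
    ⟨?_, ?_⟩)).symm
  · intro a b hab
    have hr := (SimpleGraph.ConnectedComponent.eq).mp hab
    have hh : hfun lam mu a.1 = hfun lam mu b.1 := hfun_reach lam mu hr
    ext
    by_contra hne
    have key : ∀ u v : ℕ, botR lam mu u → u < v → hfun lam mu u < hfun lam mu v := by
      intro u v hu huv
      have hnl : ¬ mu.f u < lam.f (u + 1) := by have := hu.2; omega
      exact lt_of_lt_of_le (hfun_succ_lt lam mu hnl) (hfun_mono lam mu (by omega))
    rcases Nat.lt_or_ge a.1 b.1 with h | h
    · exact absurd hh (Nat.ne_of_lt (key _ _ a.2 h))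
    · exact absurd hh.symm (Nat.ne_of_lt (key _ _ b.2 (by omega)))
  · intro c
    obtain ⟨⟨⟨i, j⟩, h⟩, rfl⟩ := c.exists_rep
    obtain ⟨t, ht, hc, hr⟩ := reach_bot lam mu N hN N i j (by omega) h
    exact ⟨⟨t, ht⟩, SimpleGraph.ConnectedComponent.eq.mpr hr.symm⟩

/-! ### Counting S1 -/

noncomputable def phi1 (lam mu : IntPartition) (b : {i // topR lam mu i} → Bool) : ℕ → ℕ :=
  fun i => if h : topR lam mu i then (if b ⟨i, h⟩ then lam.f i else lam.f i - 1)
    else (if mu.f i = lam.f i then lam.f i else lam.f i - 1)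

lemma phi1_spec (lam mu : IntPartition) (hsub : ∀ i, mu.f i ≤ lam.f i)
    (hstep : ∀ i, lam.f (i + 1) ≤ mu.f i + 1) (b : {i // topR lam mu i} → Bool) (i : ℕ) :
    mu.f i ≤ phi1 lam mu b i ∧ phi1 lam mu b i ≤ lam.f i ∧
      lam.f i ≤ phi1 lam mu b i + 1 ∧ phi1 lam mu b (i + 1) ≤ mu.f i := by
  have main : ∀ j, mu.f j ≤ phi1 lam mu b j ∧ phi1 lam mu b j ≤ lam.f j ∧
      lam.f j ≤ phi1 lam mu b j + 1 := by
    intro j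
    have h0 := hsub j
    unfold phi1
    split_ifs with h1 h2 h3
    · omega
    · have := h1.1; omega
    · omega
    · omega
  refine ⟨(main i).1, (main i).2.1, (main i).2.2, ?_⟩
  unfold phi1
  have h0 := hsub (i + 1)
  have h1 := hstep i
  have h2 := mu.antitone i (i + 1) (by omega)
  split_ifs with ht hb heq
  · exact ht.2 i rfl
  · have := ht.2 i rfl; omega
  · omega
  · omega

noncomputable def Phi1P (lam mu : IntPartition) (hsub : ∀ i, mu.f i ≤ lam.f i)
    (hstep : ∀ i, lam.f (i + 1) ≤ mu.f i + 1) (b : {i // topR lam mu i} → Bool) : IntPartition where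
  f := phi1 lam mu b
  antitone := anti_of_step fun i =>
    le_trans (phi1_spec lam mu hsub hstep b i).2.2.2 (phi1_spec lam mu hsub hstep b i).1
  eventually_zero := by
    obtain ⟨N, hN⟩ := lam.eventually_zero
    exact ⟨N, fun n hn => by
      have := (phi1_spec lam mu hsub hstep b n).2.1
      have := hN n hn
      omega⟩

lemma ncard_S1 (lam mu : IntPartition) (hsub : ∀ i, mu.f i ≤ lam.f i)
    (hstep : ∀ i, lam.f (i + 1) ≤ mu.f i + 1) :
    (S1 lam mu).ncard = 2 ^ Nat.card {i // topR lam mu i} := by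
  have hmem : ∀ b, Phi1P lam mu hsub hstep b ∈ S1 lam mu := by
    intro b
    rw [mem_S1]
    exact ⟨fun i => ⟨(phi1_spec lam mu hsub hstep b i).1,
        (phi1_spec lam mu hsub hstep b i).2.2.2⟩,
      fun i => (phi1_spec lam mu hsub hstep b i).2.1,
      fun i => (phi1_spec lam mu hsub hstep b i).2.2.1⟩
  have hbij : Function.Bijective (fun b => (⟨Phi1P lam mu hsub hstep b, hmem b⟩ :
      ↥(S1 lam mu))) := by
    constructor
    · intro b b' he
      funext t
      have hfe : phi1 lam mu b t.1 = phi1 lam mu b' t.1 :=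
        congrFun (congrArg (fun (x : ↥(S1 lam mu)) => x.1.f) he) t.1
      obtain ⟨i, hi⟩ := t
      simp only [phi1, dif_pos hi] at hfe
      have hl : mu.f i < lam.f i := hi.1
      cases hb : b ⟨i, hi⟩ <;> cases hb' : b' ⟨i, hi⟩ <;>
        first | rfl | (rw [hb, hb'] at hfe; simp at hfe <;> omega)
    · rintro ⟨ν, hν⟩
      rw [mem_S1] at hν
      obtain ⟨h1, h2, h3⟩ := hν
      refine ⟨fun t => decide (ν.f t.1 = lam.f t.1), Subtype.ext (part_ext ?_)⟩
      funext i
      show phi1 lam mu (fun t => decide (ν.f t.1 = lam.f t.1)) i = ν.f i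
      unfold phi1
      split_ifs with ht hb heq
      · simp only [decide_eq_true_eq] at hb
        exact hb.symm
      · simp only [decide_eq_true_eq] at hb
        have := h2 i
        have := h3 i
        omega
      · have := (h1 i).1
        have := h2 i
        omega
      · unfold topR at ht
        push_neg at ht
        obtain ⟨k, hk, hklt⟩ := ht (by have := hsub i; omega)
        subst hk
        have := (h1 k).2
        have := h3 (k + 1)
        omega
  have hfin : Finite {i // topR lam mu i} := by
    obtain ⟨N, hN⟩ := lam.eventually_zero
    have hss : {i | topR lam mu i} ⊆ Set.Iio N := by
      intro i hi
      simp only [Set.mem_Iio]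
      by_contra hc
      have := hN i (by omega)
      have := hi.1
      omega
    exact ((Set.finite_Iio N).subset hss).to_subtype
  rw [← Nat.card_coe_set_eq, ← Nat.card_congr (Equiv.ofBijective _ hbij),
    Nat.card_fun]
  simp [Nat.card_eq_fintype_card]

/-! ### Counting S2 -/

noncomputable def phi2 (lam mu : IntPartition) (b : {i // botR lam mu i} → Bool) : ℕ → ℕ :=
  fun i => if h : botR lam mu i then (if b ⟨i, h⟩ then mu.f i + 1 else mu.f i)
    else (if lam.f (i + 1) ≤ mu.f i then mu.f i else mu.f i + 1)

lemma phi2_spec (lam mu : IntPartition) (hsub : ∀ i, mu.f i ≤ lam.f i)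
    (hstep : ∀ i, lam.f (i + 1) ≤ mu.f i + 1) (b : {i // botR lam mu i} → Bool) (i : ℕ) :
    mu.f i ≤ phi2 lam mu b i ∧ phi2 lam mu b i ≤ mu.f i + 1 ∧
      phi2 lam mu b i ≤ lam.f i ∧ lam.f (i + 1) ≤ phi2 lam mu b i := by
  have h0 := hsub i
  have h1 := hstep i
  have h2 := lam.antitone i (i + 1) (by omega)
  unfold phi2
  split_ifs with hb hc hd
  · have := hb.1
    have := hb.2
    omega
  · have := hb.1
    have := hb.2
    omega
  · have hnb : ¬ (mu.f i < lam.f i ∧ lam.f (i + 1) ≤ mu.f i) := hb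
    have : ¬ mu.f i < lam.f i := fun hh => hnb ⟨hh, hd⟩
    omega
  · omega

noncomputable def Phi2P (lam mu : IntPartition) (hsub : ∀ i, mu.f i ≤ lam.f i)
    (hstep : ∀ i, lam.f (i + 1) ≤ mu.f i + 1) (b : {i // botR lam mu i} → Bool) : IntPartition where
  f := phi2 lam mu b
  antitone := anti_of_step fun i =>
    le_trans (phi2_spec lam mu hsub hstep b (i + 1)).2.2.1
      (phi2_spec lam mu hsub hstep b i).2.2.2
  eventually_zero := by
    obtain ⟨N, hN⟩ := lam.eventually_zero
    exact ⟨N, fun n hn => by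
      have := (phi2_spec lam mu hsub hstep b n).2.2.1
      have := hN n hn
      omega⟩

lemma ncard_S2 (lam mu : IntPartition) (hsub : ∀ i, mu.f i ≤ lam.f i)
    (hstep : ∀ i, lam.f (i + 1) ≤ mu.f i + 1) :
    (S2 lam mu).ncard = 2 ^ Nat.card {i // botR lam mu i} := by
  have hmem : ∀ b, Phi2P lam mu hsub hstep b ∈ S2 lam mu := by
    intro b
    rw [mem_S2]
    exact ⟨fun i => (phi2_spec lam mu hsub hstep b i).1,
      fun i => (phi2_spec lam mu hsub hstep b i).2.1,
      fun i => ⟨(phi2_spec lam mu hsub hstep b i).2.2.1,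
        (phi2_spec lam mu hsub hstep b i).2.2.2⟩⟩
  have hbij : Function.Bijective (fun b => (⟨Phi2P lam mu hsub hstep b, hmem b⟩ :
      ↥(S2 lam mu))) := by
    constructor
    · intro b b' he
      funext t
      have hfe : phi2 lam mu b t.1 = phi2 lam mu b' t.1 :=
        congrFun (congrArg (fun (x : ↥(S2 lam mu)) => x.1.f) he) t.1
      obtain ⟨i, hi⟩ := t
      simp only [phi2, dif_pos hi] at hfe
      cases hb : b ⟨i, hi⟩ <;> cases hb' : b' ⟨i, hi⟩ <;>
        first | rfl | (rw [hb, hb'] at hfe; simp at hfe <;> omega)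
    · rintro ⟨ν, hν⟩
      rw [mem_S2] at hν
      obtain ⟨h1, h2, h3⟩ := hν
      refine ⟨fun t => decide (ν.f t.1 = mu.f t.1 + 1), Subtype.ext (part_ext ?_)⟩
      funext i
      show phi2 lam mu (fun t => decide (ν.f t.1 = mu.f t.1 + 1)) i = ν.f i
      unfold phi2
      split_ifs with ht hb hc
      · simp only [decide_eq_true_eq] at hb
        exact hb.symm
      · simp only [decide_eq_true_eq] at hb
        have := h1 i
        have := h2 i
        omega
      · have hnb : ¬ (mu.f i < lam.f i ∧ lam.f (i + 1) ≤ mu.f i) := ht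
        have h4 : ¬ mu.f i < lam.f i := fun hh => hnb ⟨hh, hc⟩
        have := hsub i
        have := h1 i
        have := (h3 i).1
        omega
      · have := (h3 i).2
        have := h2 i
        omega
  have hfin : Finite {i // botR lam mu i} := by
    obtain ⟨N, hN⟩ := lam.eventually_zero
    have hss : {i | botR lam mu i} ⊆ Set.Iio N := by
      intro i hi
      simp only [Set.mem_Iio]
      by_contra hc
      have := hN i (by omega)
      have := hi.1
      omega
    exact ((Set.finite_Iio N).subset hss).to_subtype
  rw [← Nat.card_coe_set_eq, ← Nat.card_congr (Equiv.ofBijective _ hbij),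
    Nat.card_fun]
  simp [Nat.card_eq_fintype_card]

/-- the two sets `{ν : μ ≺ ν, ν' ≺ λ'}` and `{ν : μ' ≺ ν', ν ≺ λ}` are
simultaneously nonempty iff `μ ⊆ λ` and `λ/μ` contains no 2×2 square; in that case both have
cardinality `2^C`, where `C` is the number of connected components of `λ/μ`. -/
theorem stmt1 (lam mu : IntPartition) :
    (((S1 lam mu).Nonempty ∧ (S2 lam mu).Nonempty) ↔
      ((∀ i, mu.f i ≤ lam.f i) ∧ noTwoByTwo lam mu)) ∧
    (((∀ i, mu.f i ≤ lam.f i) ∧ noTwoByTwo lam mu) →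
      (S1 lam mu).ncard = 2 ^ Nat.card (skewGraph lam mu).ConnectedComponent ∧
      (S2 lam mu).ncard = 2 ^ Nat.card (skewGraph lam mu).ConnectedComponent) := by
  constructor
  · constructor
    · rintro ⟨⟨ν, hν⟩, -⟩
      rw [mem_S1] at hν
      obtain ⟨h1, h2, h3⟩ := hν
      have hsub : ∀ i, mu.f i ≤ lam.f i := fun i => le_trans (h1 i).1 (h2 i)
      refine ⟨hsub, no2_iff.mpr fun i => ?_⟩
      have := h3 (i + 1)
      have := (h1 i).2
      omega
    · rintro ⟨hsub, hno⟩
      exact nonempty_of lam mu hsub (no2_iff.mp hno)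
  · rintro ⟨hsub, hno⟩
    have hstep := no2_iff.mp hno
    refine ⟨?_, ?_⟩
    · rw [ncard_S1 lam mu hsub hstep, card_comp_top lam mu]
    · rw [ncard_S2 lam mu hsub hstep, card_comp_bot lam mu]
end

section
/- Under the involution ω of the fermionic Fock space sending a Maya diagram (equivalently charged partition (λ,c)) to its conjugate (λ',-c), one has ω ψ*_k ω = (-1)^{C+k+1/2} ψ_{-k} for every k ∈ ℤ+1/2, where C is the charge operator acting on Maya diagrams of charge c as multiplication by c. -/
open scoped Classical

/-- A Maya diagram: a two-coloring of `ℤ + 1/2` (the integer `n` encodes the position `n + 1/2`;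
`true` = black marble, `false` = white marble), eventually black to the left and
eventually white to the right. -/
structure Maya where
  f : ℤ → Bool
  black_small : ∃ N : ℤ, ∀ n : ℤ, n < N → f n = true
  white_large : ∃ N : ℤ, ∀ n : ℤ, N < n → f n = false

/-- The charge of a Maya diagram:
`#{k > 0 : m k = black} - #{k < 0 : m k = white}` (positions `k = n + 1/2`). -/
noncomputable def Maya.charge (m : Maya) : ℤ :=
  (Set.ncard {n : ℤ | 0 ≤ n ∧ m.f n = true} : ℤ) -
    (Set.ncard {n : ℤ | n < 0 ∧ m.f n = false} : ℤ)

/-- The fermionic Fock space: formal linear combinations of Maya diagrams. -/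
abbrev Fock := Maya →₀ ℂ

/-- Flip the marble of `m` at site `k`. -/
def Maya.flip (m : Maya) (k : ℤ) : Maya where
  f := Function.update m.f k (!(m.f k))
  black_small := by
    obtain ⟨N, hN⟩ := m.black_small
    refine ⟨min N k, fun n hn => ?_⟩
    rw [Function.update_of_ne (by omega)]
    exact hN n (by omega)
  white_large := by
    obtain ⟨N, hN⟩ := m.white_large
    refine ⟨max N k, fun n hn => ?_⟩
    rw [Function.update_of_ne (by omega)]
    exact hN n (by omega)

/-- The number of black marbles of `m` strictly above site `k`. -/
noncomputable def nAbove (m : Maya) (k : ℤ) : ℕ := Set.ncard {j : ℤ | k < j ∧ m.f j = true}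

open scoped Classical in
/-- The fermionic operator `ψ_k` (here `k : ℤ` encodes the position `k + 1/2`). -/
noncomputable def psi (k : ℤ) : Fock →ₗ[ℂ] Fock :=
  Finsupp.lsum ℂ fun m => LinearMap.toSpanSingleton ℂ Fock
    (if m.f k = false then ((-1 : ℂ) ^ nAbove m k) • Finsupp.single (m.flip k) (1 : ℂ) else 0)

open scoped Classical in
/-- The fermionic operator `ψ*_k`. -/
noncomputable def psiStar (k : ℤ) : Fock →ₗ[ℂ] Fock :=
  Finsupp.lsum ℂ fun m => LinearMap.toSpanSingleton ℂ Fock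
    (if m.f k = true then ((-1 : ℂ) ^ nAbove m k) • Finsupp.single (m.flip k) (1 : ℂ) else 0)

/-- The conjugate Maya diagram `m'`, with `{m(k), m'(-k)} = {black, white}`:
in the integer encoding of positions, `m'.f n = !(m.f (-n - 1))`. -/
def Maya.conj (m : Maya) : Maya where
  f n := !(m.f (-n - 1))
  black_small := by
    obtain ⟨N, hN⟩ := m.white_large
    exact ⟨-N - 1, fun n hn => by simp [hN (-n - 1) (by omega)]⟩
  white_large := by
    obtain ⟨N, hN⟩ := m.black_small
    exact ⟨-N, fun n hn => by simp [hN (-n - 1) (by omega)]⟩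

/-- The involution `ω` of the Fock space sending a Maya diagram (equivalently, a charged
partition `(λ, c)`) to its conjugate (corresponding to `(λ', -c)`). -/
noncomputable def omegaOp : Fock →ₗ[ℂ] Fock := Finsupp.lmapDomain ℂ ℂ Maya.conj

noncomputable def nBelow (m : Maya) (k : ℤ) : ℕ := Set.ncard {j : ℤ | j < k ∧ m.f j = false}

lemma fin_above (m : Maya) (k : ℤ) : {j : ℤ | k < j ∧ m.f j = true}.Finite := by
  obtain ⟨N, hN⟩ := m.white_large
  refine (Set.finite_Ioc k N).subset fun j hj => ?_
  rcases hj with ⟨h1, h2⟩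
  refine ⟨h1, ?_⟩
  by_contra h
  rw [hN j (by omega)] at h2
  exact absurd h2 (by simp)

lemma fin_below (m : Maya) (k : ℤ) : {j : ℤ | j < k ∧ m.f j = false}.Finite := by
  obtain ⟨N, hN⟩ := m.black_small
  refine (Set.finite_Ico N k).subset fun j hj => ?_
  rcases hj with ⟨h1, h2⟩
  refine ⟨?_, h1⟩
  by_contra h
  rw [hN j (by omega)] at h2
  exact absurd h2 (by simp)

lemma nAbove_succ (m : Maya) (k : ℤ) :
    (nAbove m k : ℤ) = nAbove m (k + 1) + (if m.f (k + 1) = true then 1 else 0) := by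
  unfold nAbove
  by_cases h : m.f (k + 1) = true
  · rw [if_pos h]
    have hset : {j : ℤ | k < j ∧ m.f j = true} =
        insert (k + 1) {j : ℤ | k + 1 < j ∧ m.f j = true} := by
      ext j
      simp only [Set.mem_setOf_eq, Set.mem_insert_iff]
      constructor
      · rintro ⟨h1, h2⟩
        rcases eq_or_lt_of_le (by omega : k + 1 ≤ j) with h3 | h3
        · exact Or.inl h3.symm
        · exact Or.inr ⟨h3, h2⟩
      · rintro (rfl | ⟨h1, h2⟩)
        · exact ⟨by omega, h⟩
        · exact ⟨by omega, h2⟩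
    rw [hset, Set.ncard_insert_of_notMem (by simp) (fin_above m (k+1))]
    push_cast; ring
  · rw [if_neg h]
    have hset : {j : ℤ | k < j ∧ m.f j = true} = {j : ℤ | k + 1 < j ∧ m.f j = true} := by
      ext j
      simp only [Set.mem_setOf_eq]
      constructor
      · rintro ⟨h1, h2⟩
        refine ⟨?_, h2⟩
        rcases eq_or_lt_of_le (by omega : k + 1 ≤ j) with h3 | h3
        · exact absurd (h3 ▸ h2) h
        · exact h3
      · rintro ⟨h1, h2⟩; exact ⟨by omega, h2⟩
    rw [hset]; push_cast; ring

lemma nBelow_succ (m : Maya) (k : ℤ) :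
    (nBelow m (k + 1) : ℤ) = nBelow m k + (if m.f k = false then 1 else 0) := by
  unfold nBelow
  by_cases h : m.f k = false
  · rw [if_pos h]
    have hset : {j : ℤ | j < k + 1 ∧ m.f j = false} =
        insert k {j : ℤ | j < k ∧ m.f j = false} := by
      ext j
      simp only [Set.mem_setOf_eq, Set.mem_insert_iff]
      constructor
      · rintro ⟨h1, h2⟩
        rcases eq_or_lt_of_le (by omega : j ≤ k) with h3 | h3
        · exact Or.inl h3
        · exact Or.inr ⟨h3, h2⟩
      · rintro (rfl | ⟨h1, h2⟩)
        · exact ⟨by omega, h⟩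
        · exact ⟨by omega, h2⟩
    rw [hset, Set.ncard_insert_of_notMem (by simp) (fin_below m k)]
    push_cast; ring
  · rw [if_neg h]
    have hset : {j : ℤ | j < k + 1 ∧ m.f j = false} = {j : ℤ | j < k ∧ m.f j = false} := by
      ext j
      simp only [Set.mem_setOf_eq]
      constructor
      · rintro ⟨h1, h2⟩
        refine ⟨?_, h2⟩
        rcases eq_or_lt_of_le (by omega : j ≤ k) with h3 | h3
        · exact absurd (h3 ▸ h2) h
        · exact h3
      · rintro ⟨h1, h2⟩; exact ⟨by omega, h2⟩
    rw [hset]; omega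

lemma key_count (m : Maya) (k : ℤ) :
    (nAbove m k : ℤ) - nBelow m k + k - (if m.f k = false then 1 else 0) = m.charge - 1 := by
  have base : (nAbove m 0 : ℤ) - nBelow m 0 + 0 - (if m.f 0 = false then 1 else 0)
      = m.charge - 1 := by
    have h1 : (nAbove m (-1) : ℤ) = nAbove m 0 + (if m.f 0 = true then 1 else 0) := by
      have := nAbove_succ m (-1); simpa using this
    have hset : {n : ℤ | 0 ≤ n ∧ m.f n = true} = {j : ℤ | -1 < j ∧ m.f j = true} := by
      ext j; simp only [Set.mem_setOf_eq]
      constructor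
      · rintro ⟨h, h2⟩; exact ⟨by omega, h2⟩
      · rintro ⟨h, h2⟩; exact ⟨by omega, h2⟩
    have hch : m.charge = (nAbove m (-1) : ℤ) - nBelow m 0 := by
      unfold Maya.charge nAbove nBelow
      rw [hset]
    rw [hch, h1]
    rcases Bool.eq_false_or_eq_true (m.f 0) with h | h <;> simp [h] <;> omega
  have step : ∀ k : ℤ,
      ((nAbove m k : ℤ) - nBelow m k + k - (if m.f k = false then 1 else 0) = m.charge - 1) ↔
      ((nAbove m (k+1) : ℤ) - nBelow m (k+1) + (k+1) - (if m.f (k+1) = false then 1 else 0)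
        = m.charge - 1) := by
    intro k
    have h1 := nAbove_succ m k
    have h2 := nBelow_succ m k
    rcases Bool.eq_false_or_eq_true (m.f k) with hk | hk <;>
      rcases Bool.eq_false_or_eq_true (m.f (k+1)) with hk1 | hk1 <;>
      simp [hk, hk1] at h1 h2 ⊢ <;> omega
  induction k using Int.induction_on with
  | zero => exact base
  | succ i ih => exact (step i).mp ih
  | pred i ih => exact (step (-(i:ℤ)-1)).mpr (by simpa [sub_add_cancel] using ih)

lemma Maya.ext' {m1 m2 : Maya} (h : m1.f = m2.f) : m1 = m2 := by
  cases m1; cases m2; simpa using h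

lemma conj_flip (m : Maya) (n : ℤ) : (m.conj.flip n).conj = m.flip (-n - 1) := by
  apply Maya.ext'
  funext j
  show (!((m.conj.flip n).f (-j - 1))) = Function.update m.f (-n - 1) (!(m.f (-n - 1))) j
  show (!(Function.update m.conj.f n (!(m.conj.f n)) (-j - 1))) = _
  by_cases hj : j = -n - 1
  · subst hj
    rw [Function.update_self]
    have h5 : (-(-n - 1) - 1 : ℤ) = n := by ring
    rw [h5, Function.update_self]
    show (!(!(!(m.f (-n - 1))))) = !(m.f (-n - 1))
    simp
  · rw [Function.update_of_ne (by omega), Function.update_of_ne hj]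
    show (!(!(m.f (-(-j - 1) - 1)))) = m.f j
    have h5 : (-(-j - 1) - 1 : ℤ) = j := by ring
    rw [h5, Bool.not_not]

lemma nAbove_conj (m : Maya) (n : ℤ) : nAbove m.conj n = nBelow m (-n - 1) := by
  unfold nAbove nBelow
  have hset : {j : ℤ | j < -n - 1 ∧ m.f j = false}
      = (fun j : ℤ => -j - 1) '' {j : ℤ | n < j ∧ m.conj.f j = true} := by
    ext i
    simp only [Set.mem_setOf_eq, Set.mem_image]
    constructor
    · rintro ⟨h1, h2⟩
      refine ⟨-i - 1, ⟨by omega, ?_⟩, by ring⟩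
      show (!(m.f (-(-i - 1) - 1))) = true
      have h5 : (-(-i - 1) - 1 : ℤ) = i := by ring
      rw [h5, h2]; rfl
    · rintro ⟨j, ⟨h1, h2⟩, rfl⟩
      refine ⟨by omega, ?_⟩
      have h3 : (!(m.f (-j - 1))) = true := h2
      simpa using h3
  rw [hset, Set.ncard_image_of_injective _ (fun a b h => by omega)]

lemma psiStar_single (k : ℤ) (m : Maya) :
    psiStar k (Finsupp.single m 1) =
      if m.f k = true then ((-1 : ℂ) ^ nAbove m k) • Finsupp.single (m.flip k) (1 : ℂ)
      else 0 := by
  simp [psiStar, Finsupp.lsum_apply, Finsupp.sum_single_index]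

lemma psi_single (k : ℤ) (m : Maya) :
    psi k (Finsupp.single m 1) =
      if m.f k = false then ((-1 : ℂ) ^ nAbove m k) • Finsupp.single (m.flip k) (1 : ℂ)
      else 0 := by
  simp [psi, Finsupp.lsum_apply, Finsupp.sum_single_index]

lemma omega_single (m : Maya) : omegaOp (Finsupp.single m 1) = Finsupp.single m.conj 1 := by
  simp [omegaOp, Finsupp.lmapDomain_apply, Finsupp.mapDomain_single]

/-- `ω ψ*_k ω = (-1)^(C + k + 1/2) ψ_{-k}`, where `C` is the charge operator;
in the integer encoding `k = n + 1/2`, the exponent is `charge + n + 1` and `-k` is encoded by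
`-n - 1`.  (Stated on each basis vector, on which the charge operator acts by the charge.) -/
theorem stmt7 (n : ℤ) (m : Maya) :
    (omegaOp ∘ₗ psiStar n ∘ₗ omegaOp) (Finsupp.single m 1) =
      ((-1 : ℂ) ^ (m.charge + n + 1)) • (psi (-n - 1)) (Finsupp.single m 1) := by
  rw [LinearMap.comp_apply, LinearMap.comp_apply, omega_single, psiStar_single, psi_single]
  by_cases h : m.f (-n - 1) = false
  · rw [if_pos (show m.conj.f n = true by show (!(m.f (-n - 1))) = true; rw [h]; rfl),
      if_pos h, map_smul, omega_single, conj_flip, nAbove_conj, smul_smul]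
    congr 1
    have hkey := key_count m (-n - 1)
    rw [if_pos h] at hkey
    have hA : (nAbove m (-n - 1) : ℤ) = m.charge + n + 1 + nBelow m (-n - 1) := by omega
    have hne : (-1 : ℂ) ≠ 0 := by norm_num
    calc ((-1 : ℂ) ^ nBelow m (-n - 1))
        = (-1 : ℂ) ^ ((nBelow m (-n - 1) : ℤ)) := by rw [zpow_natCast]
      _ = (-1 : ℂ) ^ ((2 : ℤ) * (m.charge + n + 1)) * (-1 : ℂ) ^ ((nBelow m (-n - 1) : ℤ)) := by
          rw [zpow_mul]; norm_num
      _ = (-1 : ℂ) ^ ((2 : ℤ) * (m.charge + n + 1) + (nBelow m (-n - 1) : ℤ)) :=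
          (zpow_add₀ hne _ _).symm
      _ = (-1 : ℂ) ^ ((m.charge + n + 1) + (nAbove m (-n - 1) : ℤ)) := by
          congr 1; omega
      _ = (-1 : ℂ) ^ (m.charge + n + 1) * (-1 : ℂ) ^ ((nAbove m (-n - 1) : ℤ)) :=
          zpow_add₀ hne _ _
      _ = (-1 : ℂ) ^ (m.charge + n + 1) * (-1 : ℂ) ^ nAbove m (-n - 1) := by
          rw [zpow_natCast]
  · rw [Bool.not_eq_false] at h
    rw [if_neg (show ¬ m.conj.f n = true by
        show ¬ (!(m.f (-n - 1))) = true; rw [h]; simp),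
      if_neg (by rw [h]; simp)]
    simp
end

section
/- The vertex operators satisfy the quasi-commutation relations: Γ_{a₁+}(x₁) Γ_{a₂-}(x₂) = (1-x₁x₂)^{-1} Γ_{a₂-}(x₂) Γ_{a₁+}(x₁) when a₁ = a₂, and Γ_{a₁+}(x₁) Γ_{a₂-}(x₂) = (1+x₁x₂) Γ_{a₂-}(x₂) Γ_{a₁+}(x₁) when a₁ ≠ a₂, as identities of operators on the bosonic Fock space with formal-power-series coefficients. -/
open scoped Classical

/-- `Prec a μ λ` means `μ ≺ λ` in type `a`: for `a = true` (type `L`), `λ/μ` is a horizontal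
strip (`λ ≻ μ`); for `a = false` (type `R`), `λ'/μ'` is a horizontal strip. -/
def Prec (a : Bool) (mu lam : IntPartition) : Prop :=
  if a then InterF lam.f mu.f else InterF (conjF lam.f) (conjF mu.f)

/-! ### Basics -/

theorem IntPartition.ext' {ν ν' : IntPartition} (h : ν.f = ν'.f) : ν = ν' := by
  cases ν; cases ν'; simp_all

theorem sizeF_eq_sum {f : ℕ → ℕ} {N : ℕ} (h : ∀ n, N ≤ n → f n = 0) :
    sizeF f = ∑ i ∈ Finset.range N, f i := by
  rw [sizeF]
  exact finsum_eq_sum_of_support_subset f (by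
    intro x hx
    simp only [Function.mem_support] at hx
    simp only [Finset.coe_range, Set.mem_Iio]
    by_contra hc
    exact hx (h x (le_of_not_gt hc)))

theorem IntPartition.exists_bound (ν : IntPartition) : ∃ N, ∀ n, N ≤ n → ν.f n = 0 :=
  ν.eventually_zero

/-- Single part is at most the size. -/
theorem part_le_sizeF (ν : IntPartition) (i : ℕ) : ν.f i ≤ sizeF ν.f := by
  obtain ⟨N, hN⟩ := ν.eventually_zero
  rw [sizeF_eq_sum hN]
  by_cases hi : i < N
  · exact Finset.single_le_sum (fun j _ => Nat.zero_le _) (Finset.mem_range.mpr hi)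
  · rw [hN i (le_of_not_gt hi)]; exact Nat.zero_le _

/-- Parts vanish beyond the size. -/
theorem part_eq_zero_of_sizeF_le (ν : IntPartition) (i : ℕ) (h : sizeF ν.f ≤ i) : ν.f i = 0 := by
  by_contra hne
  obtain ⟨N, hN⟩ := ν.eventually_zero
  have hiN : i < N := by
    by_contra hc
    exact hne (hN i (le_of_not_gt hc))
  have h1 : ∀ j ∈ Finset.range (i+1), 1 ≤ ν.f j := by
    intro j hj
    have := ν.antitone j i (Nat.lt_succ_iff.mp (Finset.mem_range.mp hj))
    omega
  have hle : i + 1 ≤ sizeF ν.f := by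
    rw [sizeF_eq_sum hN]
    calc i + 1 = ∑ _j ∈ Finset.range (i+1), 1 := by simp
    _ ≤ ∑ j ∈ Finset.range (i+1), ν.f j := Finset.sum_le_sum h1
    _ ≤ ∑ j ∈ Finset.range N, ν.f j := Finset.sum_le_sum_of_subset
        (Finset.range_subset_range.mpr hiN)
  omega

/-- The set of partitions of fixed size is finite. -/
theorem finite_sizeF_eq (M : ℕ) : {ν : IntPartition | sizeF ν.f = M}.Finite := by
  rw [Set.finite_coe_iff.symm]
  have : ∀ ν : {ν : IntPartition | sizeF ν.f = M}, ∀ i, ν.1.f i ≤ M := by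
    intro ν i
    have h1 := part_le_sizeF ν.1 i
    have h2 : sizeF ν.1.f = M := ν.2
    omega
  apply Finite.of_injective (fun ν : {ν : IntPartition | sizeF ν.f = M} =>
    (fun i : Fin M => (⟨ν.1.f i, Nat.lt_succ_of_le (this ν i)⟩ : Fin (M+1))))
  intro ν ν' h
  apply Subtype.ext
  apply IntPartition.ext'
  funext i
  by_cases hi : i < M
  · have := congrFun h ⟨i, hi⟩
    simpa using this
  · have h1 : ν.1.f i = 0 := part_eq_zero_of_sizeF_le _ _ (by rw [ν.2]; omega)
    have h2 : ν'.1.f i = 0 := part_eq_zero_of_sizeF_le _ _ (by rw [ν'.2]; omega)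
    rw [h1, h2]

/-! ### Conjugation -/

theorem lower_set_mem_iff {T : Set ℕ} (hfin : T.Finite)
    (hlow : ∀ j j', j' ≤ j → j ∈ T → j' ∈ T) (j : ℕ) : j ∈ T ↔ j + 1 ≤ T.ncard := by
  constructor
  · intro hj
    have hsub : Set.Iio (j+1) ⊆ T := fun x hx => hlow j x (Nat.lt_succ_iff.mp hx) hj
    have he : (Set.Iio (j+1)) = ↑(Finset.range (j+1)) := by ext x; simp
    calc j + 1 = (Set.Iio (j+1)).ncard := by
          rw [he, Set.ncard_coe_finset, Finset.card_range]
    _ ≤ T.ncard := Set.ncard_le_ncard hsub hfin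
  · intro hj
    by_contra hjT
    have hsub : T ⊆ Set.Iio j := by
      intro x hx
      by_contra hc
      exact hjT (hlow x j (le_of_not_gt hc) hx)
    have : T.ncard ≤ j := by
      calc T.ncard ≤ (Set.Iio j).ncard := Set.ncard_le_ncard hsub (by
            rw [← Finset.coe_range]; exact (Finset.range j).finite_toSet)
      _ = j := by rw [← Finset.coe_range, Set.ncard_coe_finset]; simp
    omega

theorem conj_set_finite (ν : IntPartition) (i : ℕ) : {j : ℕ | i + 1 ≤ ν.f j}.Finite := by
  obtain ⟨N, hN⟩ := ν.eventually_zero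
  apply Set.Finite.subset (Set.finite_Iio N)
  intro j hj
  simp only [Set.mem_setOf_eq] at hj
  simp only [Set.mem_Iio]
  by_contra hc
  rw [hN j (le_of_not_gt hc)] at hj
  omega

/-- Galois correspondence for conjugation. -/
theorem conj_galois (ν : IntPartition) (i j : ℕ) :
    i + 1 ≤ ν.f j ↔ j + 1 ≤ conjF ν.f i := by
  rw [conjF]
  exact lower_set_mem_iff (conj_set_finite ν i)
      (fun a a' haa ha => le_trans ha (ν.antitone a' a haa)) j

noncomputable def conjP (ν : IntPartition) : IntPartition where
  f := conjF ν.f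
  antitone := by
    intro i j hij
    apply Set.ncard_le_ncard _ (conj_set_finite ν i)
    intro x hx
    simp only [Set.mem_setOf_eq] at *
    omega
  eventually_zero := by
    refine ⟨ν.f 0, fun n hn => ?_⟩
    rw [conjF]
    convert Set.ncard_empty ℕ
    ext j
    simp only [Set.mem_setOf_eq, Set.mem_empty_iff_false, iff_false]
    have := ν.antitone 0 j (Nat.zero_le j)
    omega

theorem conjP_f (ν : IntPartition) : (conjP ν).f = conjF ν.f := rfl

theorem conjP_conjP (ν : IntPartition) : conjP (conjP ν) = ν := by
  apply IntPartition.ext'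
  funext j
  have key : ∀ i, i + 1 ≤ (conjP (conjP ν)).f j ↔ i + 1 ≤ ν.f j := by
    intro i
    rw [conjP_f, ← conj_galois (conjP ν) j i]
    exact (conj_galois ν i j).symm
  by_cases h : (conjP (conjP ν)).f j ≤ ν.f j
  · rcases Nat.lt_or_ge ((conjP (conjP ν)).f j) (ν.f j) with h' | h'
    · have := (key (ν.f j - 1)).mpr (by omega)
      omega
    · omega
  · have := (key ((conjP (conjP ν)).f j - 1)).mp (by omega)
    omega

theorem filter_lt_range {N c : ℕ} (h : c ≤ N) :
    (Finset.range N).filter (fun i => i < c) = Finset.range c := by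
  ext x
  simp only [Finset.mem_filter, Finset.mem_range]
  omega

theorem sizeF_conjP (ν : IntPartition) : sizeF (conjP ν).f = sizeF ν.f := by
  obtain ⟨N₀, hN₀⟩ := ν.eventually_zero
  set N := max N₀ (ν.f 0) with hNdef
  have hν : ∀ n, N ≤ n → ν.f n = 0 := fun n hn => hN₀ n (le_trans (le_max_left _ _) hn)
  have hb : ∀ j, ν.f j ≤ N := fun j =>
    le_trans (ν.antitone 0 j (Nat.zero_le _)) (le_max_right _ _)
  have hc : ∀ n, N ≤ n → (conjP ν).f n = 0 := by
    intro n hn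
    rw [conjP_f, conjF]
    convert Set.ncard_empty ℕ
    ext j
    simp only [Set.mem_setOf_eq, Set.mem_empty_iff_false, iff_false]
    have := hb j
    omega
  rw [sizeF_eq_sum hν, sizeF_eq_sum hc]
  have hrepr : ∀ i, (conjP ν).f i = ((Finset.range N).filter (fun j => i + 1 ≤ ν.f j)).card := by
    intro i
    rw [conjP_f, conjF, ← Set.ncard_coe_finset]
    congr 1
    ext j
    simp only [Finset.coe_filter, Finset.mem_range, Set.mem_setOf_eq]
    constructor
    · intro hj
      refine ⟨?_, hj⟩
      by_contra hcj
      rw [hN₀ j (by omega)] at hj; omega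
    · exact fun h => h.2
  calc ∑ i ∈ Finset.range N, (conjP ν).f i
      = ∑ i ∈ Finset.range N, ∑ j ∈ Finset.range N, if i + 1 ≤ ν.f j then 1 else 0 := by
        apply Finset.sum_congr rfl
        intro i _
        rw [hrepr i, Finset.card_filter]
    _ = ∑ j ∈ Finset.range N, ∑ i ∈ Finset.range N, if i < ν.f j then 1 else 0 := by
        rw [Finset.sum_comm]
        apply Finset.sum_congr rfl; intro j _; apply Finset.sum_congr rfl; intro i _
        congr 1
    _ = ∑ j ∈ Finset.range N, ν.f j := by
        apply Finset.sum_congr rfl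
        intro j _
        rw [← Finset.card_filter, filter_lt_range (hb j), Finset.card_range]

/-- Vertical strip: `μ ⊆ ν` with at most one box per row. -/
def VS (m n : ℕ → ℕ) : Prop := ∀ i, m i ≤ n i ∧ n i ≤ m i + 1

/-- Characterization of `Prec false` as a vertical strip. -/
theorem prec_false_iff (μ ν : IntPartition) :
    Prec false μ ν ↔ VS μ.f ν.f := by
  have hPrec : Prec false μ ν ↔ InterF (conjF ν.f) (conjF μ.f) := Iff.rfl
  rw [hPrec]
  constructor
  · intro h j
    constructor
    · by_cases hz : μ.f j = 0
      · omega
      · have h2 := (conj_galois μ (μ.f j - 1) j).mp (by omega)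
        have h3 := (h (μ.f j - 1)).1
        have h4 := (conj_galois ν (μ.f j - 1) j).mpr (by omega)
        omega
    · by_contra hc
      push_neg at hc
      have h2 := (conj_galois ν (μ.f j + 1) j).mp (by omega)
      have h3 := (h (μ.f j)).2
      have h6 := (conj_galois μ (μ.f j) j).mpr (by omega)
      omega
  · intro h i
    constructor
    · rw [conjF, conjF]
      apply Set.ncard_le_ncard _ (conj_set_finite ν i)
      intro j hj
      simp only [Set.mem_setOf_eq] at *
      have := (h j).1
      omega
    · by_cases hz : conjF ν.f (i+1) = 0
      · omega
      · set j := conjF ν.f (i+1) - 1 with hjdef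
        have h2 := (conj_galois ν (i+1) j).mpr (by omega)
        have h3 : i + 1 ≤ μ.f j := by have := (h j).2; omega
        have h4 := (conj_galois μ i j).mp h3
        omega

/-- Transport along conjugation. -/
theorem ncard_conj_transport (P : IntPartition → Prop) :
    {ν : IntPartition | P ν}.ncard = {ν : IntPartition | P (conjP ν)}.ncard := by
  have himg : conjP '' {ν : IntPartition | P (conjP ν)} = {ν : IntPartition | P ν} := by
    ext x
    simp only [Set.mem_image, Set.mem_setOf_eq]
    constructor
    · rintro ⟨y, hy, rfl⟩; exact hy
    · intro hx; exact ⟨conjP x, by rwa [conjP_conjP], conjP_conjP x⟩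
  rw [← himg]
  rw [Set.ncard_image_of_injective _ (fun a b hab => by
    rw [← conjP_conjP a, hab, conjP_conjP])]

/-! ### Helpers -/

/-- Wrap a function into a partition, if valid. -/
noncomputable def mkP (f : ℕ → ℕ) : IntPartition :=
  if h : (∀ i j : ℕ, i ≤ j → f j ≤ f i) ∧ (∃ N : ℕ, ∀ n : ℕ, N ≤ n → f n = 0)
  then ⟨f, h.1, h.2⟩ else emptyP

theorem mkP_f {f : ℕ → ℕ} (h1 : ∀ i j : ℕ, i ≤ j → f j ≤ f i)
    (h2 : ∃ N : ℕ, ∀ n : ℕ, N ≤ n → f n = 0) : (mkP f).f = f := by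
  rw [mkP, dif_pos ⟨h1, h2⟩]

theorem ncard_biUnion_range {α : Type*} (A : ℕ → Set α) (n : ℕ)
    (hfin : ∀ j, (A j).Finite) (hdisj : ∀ i j, i ≠ j → Disjoint (A i) (A j)) :
    (⋃ j ∈ Finset.range n, A j).ncard = ∑ j ∈ Finset.range n, (A j).ncard := by
  induction n with
  | zero => simp
  | succ n ih =>
    rw [Finset.sum_range_succ, ← ih]
    have hU : (⋃ j ∈ Finset.range (n+1), A j) = (⋃ j ∈ Finset.range n, A j) ∪ A n := by
      ext x
      simp only [Set.mem_iUnion, Finset.mem_range, Set.mem_union]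
      constructor
      · rintro ⟨j, hj, hx⟩
        rcases Nat.lt_or_ge j n with h | h
        · exact Or.inl ⟨j, h, hx⟩
        · have : j = n := by omega
          exact Or.inr (this ▸ hx)
      · rintro (⟨j, hj, hx⟩ | hx)
        · exact ⟨j, by omega, hx⟩
        · exact ⟨n, by omega, hx⟩
    rw [hU]
    apply Set.ncard_union_eq
    · rw [Set.disjoint_left]
      intro x hx hxn
      simp only [Set.mem_iUnion, Finset.mem_range] at hx
      obtain ⟨j, hj, hx⟩ := hx
      exact (Set.disjoint_left.mp (hdisj j n (by omega)) hx) hxn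
    · exact Set.Finite.biUnion (Finset.range n).finite_toSet (fun j _ => hfin j)
    · exact hfin n

theorem head_le {k nf : ℕ → ℕ} {N p : ℕ} (hk : ∀ n, N ≤ n → k n = 0)
    (hn : ∀ n, N ≤ n → nf n = 0) (hpt : ∀ i, k i ≤ nf i)
    (hs : sizeF nf = sizeF k + p) : nf 0 ≤ k 0 + p := by
  rw [sizeF_eq_sum (N := N+1) (fun n hn' => hn n (by omega)),
    sizeF_eq_sum (N := N+1) (fun n hn' => hk n (by omega))] at hs
  rw [Finset.sum_range_succ' nf N, Finset.sum_range_succ' k N] at hs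
  have htail : ∑ i ∈ Finset.range N, k (i+1) ≤ ∑ i ∈ Finset.range N, nf (i+1) :=
    Finset.sum_le_sum (fun i _ => hpt (i+1))
  omega

/-- The master size identity for the equal-type bijection. -/
theorem sum_core {k m nf rf : ℕ → ℕ} {N j : ℕ}
    (hk : ∀ n, N ≤ n → k n = 0) (hm : ∀ n, N ≤ n → m n = 0)
    (hn : ∀ n, N + 1 ≤ n → nf n = 0) (hr : ∀ n, N ≤ n → rf n = 0)
    (hex : ∀ i, rf i + nf (i+1) = min (k i) (m i) + max (k (i+1)) (m (i+1)))
    (h0 : nf 0 = max (k 0) (m 0) + j) :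
    sizeF nf + sizeF rf = sizeF k + sizeF m + j := by
  rw [sizeF_eq_sum (N := N+2) (fun n hn' => hn n (by omega)),
    sizeF_eq_sum (N := N+2) (fun n hn' => hr n (by omega)),
    sizeF_eq_sum (N := N+2) (fun n hn' => hk n (by omega)),
    sizeF_eq_sum (N := N+2) (fun n hn' => hm n (by omega))]
  have E : ∑ i ∈ Finset.range (N+1), rf i + ∑ i ∈ Finset.range (N+1), nf (i+1)
      = ∑ i ∈ Finset.range (N+1), min (k i) (m i)
        + ∑ i ∈ Finset.range (N+1), max (k (i+1)) (m (i+1)) := by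
    rw [← Finset.sum_add_distrib, ← Finset.sum_add_distrib]
    exact Finset.sum_congr rfl (fun i _ => hex i)
  have E1 : ∑ i ∈ Finset.range (N+2), nf i = ∑ i ∈ Finset.range (N+1), nf (i+1) + nf 0 :=
    Finset.sum_range_succ' nf (N+1)
  have E2 : ∑ i ∈ Finset.range (N+2), max (k i) (m i)
      = ∑ i ∈ Finset.range (N+1), max (k (i+1)) (m (i+1)) + max (k 0) (m 0) :=
    Finset.sum_range_succ' (fun i => max (k i) (m i)) (N+1)
  have E3 : ∑ i ∈ Finset.range (N+2), rf i = ∑ i ∈ Finset.range (N+1), rf i + rf (N+1) :=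
    Finset.sum_range_succ rf (N+1)
  have E4 : ∑ i ∈ Finset.range (N+2), min (k i) (m i)
      = ∑ i ∈ Finset.range (N+1), min (k i) (m i) + min (k (N+1)) (m (N+1)) :=
    Finset.sum_range_succ (fun i => min (k i) (m i)) (N+1)
  have E5 : ∑ i ∈ Finset.range (N+2), min (k i) (m i) + ∑ i ∈ Finset.range (N+2), max (k i) (m i)
      = ∑ i ∈ Finset.range (N+2), k i + ∑ i ∈ Finset.range (N+2), m i := by
    rw [← Finset.sum_add_distrib, ← Finset.sum_add_distrib]
    exact Finset.sum_congr rfl (fun i _ => by omega)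
  have hrN : rf (N+1) = 0 := hr (N+1) (by omega)
  have hminN : min (k (N+1)) (m (N+1)) = 0 := by
    rw [hk (N+1) (by omega)]; omega
  omega

theorem anti_succ {g : ℕ → ℕ} (h : ∀ n, g (n+1) ≤ g n) : ∀ i j : ℕ, i ≤ j → g j ≤ g i := by
  have key : ∀ d i, g (i + d) ≤ g i := by
    intro d
    induction d with
    | zero => intro i; simp
    | succ d ih =>
      intro i
      have h1 : i + (d + 1) = (i + d) + 1 := by omega
      rw [h1]
      exact le_trans (h (i + d)) (ih i)
  intro i j hij
  have := key (j - i) i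
  have h2 : i + (j - i) = j := by omega
  rwa [h2] at this

/-! ### Equal-type core -/

theorem core_eq (κ μ : IntPartition) (p q : ℕ) :
    Set.ncard {ν : IntPartition | InterF ν.f κ.f ∧ InterF ν.f μ.f ∧
        sizeF ν.f = sizeF κ.f + p ∧ sizeF ν.f = sizeF μ.f + q} =
    ∑ j ∈ Finset.range (min p q + 1),
      Set.ncard {ρ : IntPartition | InterF μ.f ρ.f ∧ InterF κ.f ρ.f ∧
        sizeF μ.f = sizeF ρ.f + (p - j) ∧ sizeF κ.f = sizeF ρ.f + (q - j)} := by
  obtain ⟨N₁, hN₁⟩ := κ.eventually_zero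
  obtain ⟨N₂, hN₂⟩ := μ.eventually_zero
  set N := max N₁ N₂ with hN
  have hkz : ∀ n, N ≤ n → κ.f n = 0 := fun n hn => hN₁ n (by omega)
  have hmz : ∀ n, N ≤ n → μ.f n = 0 := fun n hn => hN₂ n (by omega)
  set L := {ν : IntPartition | InterF ν.f κ.f ∧ InterF ν.f μ.f ∧
      sizeF ν.f = sizeF κ.f + p ∧ sizeF ν.f = sizeF μ.f + q} with hL
  set A := fun j => {ν ∈ L | ν.f 0 = max (κ.f 0) (μ.f 0) + j} with hA
  have hLfacts : ∀ ν ∈ L, (∀ i, ν.f (i+1) ≤ min (κ.f i) (μ.f i)) ∧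
      (∀ i, max (κ.f i) (μ.f i) ≤ ν.f i) ∧ (∀ n, N + 1 ≤ n → ν.f n = 0) := by
    intro ν hν
    obtain ⟨h1, h2, h3, h4⟩ := hν
    refine ⟨fun i => ?_, fun i => ?_, fun n hn => ?_⟩
    · have := (h1 i).2; have := (h2 i).2; omega
    · have := (h1 i).1; have := (h2 i).1; omega
    · have h5 := (h1 (n-1)).2
      have h6 := hkz (n-1) (by omega)
      have h7 : n - 1 + 1 = n := by omega
      rw [h7] at h5; omega
  have hcover : L = ⋃ j ∈ Finset.range (min p q + 1), A j := by
    ext ν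
    simp only [Set.mem_iUnion, Finset.mem_range, hA, Set.mem_setOf_eq, Set.mem_sep_iff]
    constructor
    · intro hν
      obtain ⟨hf1, hf2, hf3⟩ := hLfacts ν hν
      obtain ⟨h1, h2, h3, h4⟩ := hν
      have hp : ν.f 0 ≤ κ.f 0 + p :=
        head_le (N := N+1) (fun n hn => hkz n (by omega)) hf3 (fun i => (h1 i).1) h3
      have hq : ν.f 0 ≤ μ.f 0 + q :=
        head_le (N := N+1) (fun n hn => hmz n (by omega)) hf3 (fun i => (h2 i).1) h4
      have hge : max (κ.f 0) (μ.f 0) ≤ ν.f 0 := by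
        have := (h1 0).1; have := (h2 0).1; omega
      exact ⟨ν.f 0 - max (κ.f 0) (μ.f 0), by omega, ⟨h1, h2, h3, h4⟩, by omega⟩
    · rintro ⟨j, hj, hν, _⟩
      exact hν
  rw [hcover, ncard_biUnion_range _ _
    (fun j => Set.Finite.subset (finite_sizeF_eq (sizeF κ.f + p)) (fun ν hν => hν.1.2.2.1))
    (fun i j hij => Set.disjoint_left.mpr (fun ν hνi hνj => by
      have e1 := hνi.2; have e2 := hνj.2; exact hij (by omega)))]
  apply Finset.sum_congr rfl
  intro j hj
  rw [Finset.mem_range] at hj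
  have hjp : j ≤ p := by omega
  have hjq : j ≤ q := by omega
  set Φ : IntPartition → IntPartition := fun ν =>
    mkP (fun i => min (κ.f i) (μ.f i) + max (κ.f (i+1)) (μ.f (i+1)) - ν.f (i+1)) with hΦ
  have hkey : ∀ ν ∈ A j, (Φ ν).f =
      (fun i => min (κ.f i) (μ.f i) + max (κ.f (i+1)) (μ.f (i+1)) - ν.f (i+1)) := by
    intro ν hν
    obtain ⟨hf1, hf2, hf3⟩ := hLfacts ν hν.1
    apply mkP_f
    · refine anti_succ (fun n => ?_)
      show min (κ.f (n+1)) (μ.f (n+1)) + max (κ.f (n+1+1)) (μ.f (n+1+1)) - ν.f (n+1+1)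
          ≤ min (κ.f n) (μ.f n) + max (κ.f (n+1)) (μ.f (n+1)) - ν.f (n+1)
      have e1 := hf1 n; have e2 := hf1 (n+1); have e3 := hf2 (n+1+1)
      omega
    · refine ⟨N, fun n hn => ?_⟩
      show min (κ.f n) (μ.f n) + max (κ.f (n+1)) (μ.f (n+1)) - ν.f (n+1) = 0
      have := hkz n hn; have := hkz (n+1) (by omega)
      have := hmz n hn; have := hmz (n+1) (by omega)
      omega
  have hexact : ∀ ν ∈ A j, ∀ i, (Φ ν).f i + ν.f (i+1)
      = min (κ.f i) (μ.f i) + max (κ.f (i+1)) (μ.f (i+1)) := by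
    intro ν hν i
    rw [hkey ν hν]
    show (min (κ.f i) (μ.f i) + max (κ.f (i+1)) (μ.f (i+1)) - ν.f (i+1)) + ν.f (i+1)
        = min (κ.f i) (μ.f i) + max (κ.f (i+1)) (μ.f (i+1))
    obtain ⟨hf1, hf2, hf3⟩ := hLfacts ν hν.1
    have := hf1 i; have := hf2 (i+1)
    omega
  have himg : Φ '' A j = {ρ : IntPartition | InterF μ.f ρ.f ∧ InterF κ.f ρ.f ∧
      sizeF μ.f = sizeF ρ.f + (p - j) ∧ sizeF κ.f = sizeF ρ.f + (q - j)} := by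
    ext ρ
    constructor
    · rintro ⟨ν, hν, rfl⟩
      obtain ⟨hf1, hf2, hf3⟩ := hLfacts ν hν.1
      have h0 := hν.2
      obtain ⟨h1, h2, h3, h4⟩ := hν.1
      have hex := hexact ν hν
      have hrz : ∀ n, N ≤ n → (Φ ν).f n = 0 := fun n hn => by
        have := hex n; have := hkz n hn; have := hmz n hn
        have := hkz (n+1) (by omega); have := hmz (n+1) (by omega); omega
      have hsum := sum_core hkz hmz hf3 hrz hex h0
      refine ⟨fun i => ?_, fun i => ?_, by omega, by omega⟩
      · have := hex i; have := hf1 i; have := hf2 (i+1)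
        exact ⟨by omega, by omega⟩
      · have := hex i; have := hf1 i; have := hf2 (i+1)
        exact ⟨by omega, by omega⟩
    · intro hρ
      obtain ⟨h1, h2, h3, h4⟩ := hρ
      have g1 : ∀ i, ρ.f i ≤ min (κ.f i) (μ.f i) := fun i => by
        have := (h1 i).1; have := (h2 i).1; omega
      have g2 : ∀ i, max (κ.f (i+1)) (μ.f (i+1)) ≤ ρ.f i := fun i => by
        have := (h1 i).2; have := (h2 i).2; omega
      have hρz : ∀ n, N ≤ n → ρ.f n = 0 := fun n hn => by
        have := g1 n; have := hkz n hn; omega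
      set nf : ℕ → ℕ := fun i => match i with
        | 0 => max (κ.f 0) (μ.f 0) + j
        | (i+1) => min (κ.f i) (μ.f i) + max (κ.f (i+1)) (μ.f (i+1)) - ρ.f i with hnfd
      have hnf0 : nf 0 = max (κ.f 0) (μ.f 0) + j := rfl
      have hnex : ∀ i, ρ.f i + nf (i+1)
          = min (κ.f i) (μ.f i) + max (κ.f (i+1)) (μ.f (i+1)) := fun i => by
        show ρ.f i + (min (κ.f i) (μ.f i) + max (κ.f (i+1)) (μ.f (i+1)) - ρ.f i) = _
        have := g1 i; omega
      have hanti : ∀ i₂ j₂ : ℕ, i₂ ≤ j₂ → nf j₂ ≤ nf i₂ := by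
        refine anti_succ (fun n => ?_)
        cases n with
        | zero =>
          have e1 := hnex 0; have e2 := g2 0
          rw [hnf0]; omega
        | succ n =>
          have e1 := hnex n; have e2 := hnex (n+1)
          have e3 := g1 n; have e4 := g2 (n+1)
          omega
      have hez : ∀ n, N + 1 ≤ n → nf n = 0 := by
        intro n hn
        cases n with
        | zero => omega
        | succ i =>
          have e1 := hnex i
          have := hkz i (by omega); have := hmz i (by omega)
          have := hkz (i+1) (by omega); have := hmz (i+1) (by omega)
          have := hρz i (by omega)
          omega
      have hνf : (mkP nf).f = nf := mkP_f hanti ⟨N+1, hez⟩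
      have hex' : ∀ i, ρ.f i + (mkP nf).f (i+1)
          = min (κ.f i) (μ.f i) + max (κ.f (i+1)) (μ.f (i+1)) := by
        intro i; rw [hνf]; exact hnex i
      have hsum := sum_core hkz hmz (fun n hn => by rw [hνf]; exact hez n hn) hρz
        (fun i => hex' i) (by rw [hνf])
      have hb1 : ∀ i, κ.f i ≤ nf i ∧ μ.f i ≤ nf i := by
        intro i
        cases i with
        | zero => rw [hnf0]; omega
        | succ i => have := hnex i; have := g1 i; omega
      have hb3 : ∀ i, nf (i+1) ≤ κ.f i ∧ nf (i+1) ≤ μ.f i := by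
        intro i; have := hnex i; have := g2 i; omega
      have hmemν : mkP nf ∈ A j := by
        refine ⟨⟨fun i => ?_, fun i => ?_, by omega, by omega⟩, by rw [hνf]⟩
        · rw [hνf]; exact ⟨(hb1 i).1, (hb3 i).1⟩
        · rw [hνf]; exact ⟨(hb1 i).2, (hb3 i).2⟩
      refine ⟨mkP nf, hmemν, ?_⟩
      apply IntPartition.ext'
      rw [hkey _ hmemν]
      funext i
      show min (κ.f i) (μ.f i) + max (κ.f (i+1)) (μ.f (i+1)) - (mkP nf).f (i+1) = ρ.f i
      rw [hνf]
      have := hnex i; have := g1 i; omega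
  have hinj : Set.InjOn Φ (A j) := by
    intro ν hν ν' hν' heq
    have e := congrArg IntPartition.f heq
    rw [hkey ν hν, hkey ν' hν'] at e
    obtain ⟨hf1, hf2, hf3⟩ := hLfacts ν hν.1
    obtain ⟨hf1', hf2', hf3'⟩ := hLfacts ν' hν'.1
    apply IntPartition.ext'
    funext i
    cases i with
    | zero => rw [hν.2, hν'.2]
    | succ i =>
      have e1 := congrFun e i
      have := hf1 i; have := hf2 (i+1); have := hf1' i; have := hf2' (i+1)
      omega
  rw [← himg, Set.ncard_image_of_injOn hinj]

/-! ### Mixed-type helpers -/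

theorem sum_ite_card {M : ℕ} {T : Finset ℕ} (h : T ⊆ Finset.range M) :
    ∑ i ∈ Finset.range M, (if i ∈ T then 1 else 0) = T.card := by
  rw [Finset.sum_ite_mem, Finset.inter_eq_right.mpr h]
  simp

theorem rho_of_T (κ μ : IntPartition) (N : ℕ) (hkz : ∀ n, N ≤ n → κ.f n = 0)
    (hmz : ∀ n, N ≤ n → μ.f n = 0)
    (hG : ∀ i, μ.f (i+1) ≤ κ.f i ∧ κ.f i ≤ μ.f i + 1)
    (T : Finset ℕ) (hTE : ∀ i ∈ T, μ.f (i+1) + 1 ≤ κ.f i)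
    (hFT : ∀ i, κ.f i = μ.f i + 1 → i ∈ T) :
    ∃ ρ : IntPartition, (∀ i, ρ.f i = κ.f i - (if i ∈ T then 1 else 0)) ∧
      InterF μ.f ρ.f ∧ VS ρ.f κ.f ∧ sizeF ρ.f + T.card = sizeF κ.f ∧
      sizeF ρ.f ≤ sizeF μ.f := by
  set rf : ℕ → ℕ := fun i => κ.f i - (if i ∈ T then 1 else 0) with hrf
  have hTN : T ⊆ Finset.range N := by
    intro i hi; rw [Finset.mem_range]
    have := hTE i hi
    by_contra hc
    have := hkz i (by omega); omega
  have hle : ∀ i, rf i ≤ μ.f i := by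
    intro i
    by_cases hiT : i ∈ T
    · have h1 := hTE i hiT; have h2 := (hG i).2
      simp only [hrf, if_pos hiT]; omega
    · have h2 := (hG i).2
      have h3 : κ.f i ≠ μ.f i + 1 := fun hc => hiT (hFT i hc)
      simp only [hrf, if_neg hiT]; omega
  have hge : ∀ i, μ.f (i+1) ≤ rf i := by
    intro i
    by_cases hiT : i ∈ T
    · have := hTE i hiT; simp only [hrf, if_pos hiT]; omega
    · have := (hG i).1; simp only [hrf, if_neg hiT]; omega
  have hanti : ∀ i j : ℕ, i ≤ j → rf j ≤ rf i :=
    anti_succ (fun n => le_trans (hle (n+1)) (hge n))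
  have hez : ∀ n, N ≤ n → rf n = 0 := by
    intro n hn
    have h1 : n ∉ T := fun hc => by
      have := Finset.mem_range.mp (hTN hc); omega
    simp only [hrf, if_neg h1]
    have := hkz n hn; omega
  have hf : (mkP rf).f = rf := mkP_f hanti ⟨N, hez⟩
  refine ⟨mkP rf, fun i => by rw [hf], fun i => by rw [hf]; exact ⟨hle i, hge i⟩,
    fun i => ?_, ?_, ?_⟩
  · rw [hf]
    by_cases hiT : i ∈ T
    · have := hTE i hiT
      simp only [hrf, if_pos hiT]
      constructor <;> omega
    · simp only [hrf, if_neg hiT]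
      constructor <;> omega
  · rw [hf, sizeF_eq_sum hez, sizeF_eq_sum hkz]
    have hsum : ∑ i ∈ Finset.range N, (rf i + (if i ∈ T then 1 else 0))
        = ∑ i ∈ Finset.range N, κ.f i := by
      apply Finset.sum_congr rfl
      intro i _
      by_cases hiT : i ∈ T
      · have := hTE i hiT
        simp only [hrf, if_pos hiT]; omega
      · simp only [hrf, if_neg hiT]; omega
    rw [Finset.sum_add_distrib, sum_ite_card hTN] at hsum
    omega
  · rw [hf, sizeF_eq_sum hez, sizeF_eq_sum hmz]
    exact Finset.sum_le_sum (fun i _ => hle i)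

theorem nu_of_S (κ μ : IntPartition) (N : ℕ) (hkz : ∀ n, N ≤ n → κ.f n = 0)
    (hmz : ∀ n, N ≤ n → μ.f n = 0)
    (hG : ∀ i, μ.f (i+1) ≤ κ.f i ∧ κ.f i ≤ μ.f i + 1)
    (S : Finset ℕ) (hSE : ∀ i : ℕ, i + 1 ∈ S → μ.f (i+1) + 1 ≤ κ.f i)
    (hFS : ∀ i, κ.f i = μ.f i + 1 → i ∈ S) :
    ∃ ν : IntPartition, (∀ i, ν.f i = μ.f i + (if i ∈ S then 1 else 0)) ∧
      InterF ν.f κ.f ∧ VS μ.f ν.f ∧ sizeF ν.f = sizeF μ.f + S.card := by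
  set nf : ℕ → ℕ := fun i => μ.f i + (if i ∈ S then 1 else 0) with hnf
  have hSN : S ⊆ Finset.range (N+1) := by
    intro i hi
    rw [Finset.mem_range]
    cases i with
    | zero => omega
    | succ i =>
      have := hSE i hi
      by_contra hc
      have := hkz i (by omega); omega
  have hkle : ∀ i, κ.f i ≤ nf i := by
    intro i
    by_cases hiS : i ∈ S
    · have := (hG i).2; simp only [hnf, if_pos hiS]; omega
    · have h3 : κ.f i ≠ μ.f i + 1 := fun hc => hiS (hFS i hc)
      have := (hG i).2
      simp only [hnf, if_neg hiS]; omega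
  have hles : ∀ i, nf (i+1) ≤ κ.f i := by
    intro i
    by_cases hiS : i + 1 ∈ S
    · have := hSE i hiS; simp only [hnf, if_pos hiS]; omega
    · have := (hG i).1; simp only [hnf, if_neg hiS]; omega
  have hanti : ∀ i j : ℕ, i ≤ j → nf j ≤ nf i :=
    anti_succ (fun n => le_trans (hles n) (hkle n))
  have hez : ∀ n, N + 1 ≤ n → nf n = 0 := by
    intro n hn
    have h1 : n ∉ S := fun hc => by
      have := Finset.mem_range.mp (hSN hc); omega
    simp only [hnf, if_neg h1]
    have := hmz n (by omega); omega
  have hf : (mkP nf).f = nf := mkP_f hanti ⟨N+1, hez⟩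
  refine ⟨mkP nf, fun i => by rw [hf], fun i => by rw [hf]; exact ⟨hkle i, hles i⟩,
    fun i => ?_, ?_⟩
  · rw [hf]
    by_cases hiS : i ∈ S
    · simp only [hnf, if_pos hiS]; omega
    · simp only [hnf, if_neg hiS]; omega
  · rw [hf, sizeF_eq_sum hez, sizeF_eq_sum (fun n (hn : N+1 ≤ n) => hmz n (by omega))]
    have hsum : ∑ i ∈ Finset.range (N+1), nf i
        = ∑ i ∈ Finset.range (N+1), μ.f i + ∑ i ∈ Finset.range (N+1), (if i ∈ S then 1 else 0) := by
      rw [← Finset.sum_add_distrib]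
    rw [hsum, sum_ite_card hSN]

/-! ### Mixed-type counting -/

theorem mixedR (κ μ : IntPartition) (N : ℕ) (hkz : ∀ n, N ≤ n → κ.f n = 0)
    (hmz : ∀ n, N ≤ n → μ.f n = 0)
    (hG : ∀ i, μ.f (i+1) ≤ κ.f i ∧ κ.f i ≤ μ.f i + 1) (p' q' : ℕ) :
    {ρ : IntPartition | InterF μ.f ρ.f ∧ VS ρ.f κ.f ∧ sizeF μ.f = sizeF ρ.f + p' ∧
      sizeF κ.f = sizeF ρ.f + q'}.ncard =
    if sizeF μ.f + q' = sizeF κ.f + p' ∧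
        ((Finset.range N).filter (fun i => κ.f i = μ.f i + 1)).card ≤ q' then
      ((((Finset.range N).filter (fun i => μ.f (i+1) + 1 ≤ κ.f i)) \
        ((Finset.range N).filter (fun i => κ.f i = μ.f i + 1))).card).choose
        (q' - ((Finset.range N).filter (fun i => κ.f i = μ.f i + 1)).card)
    else 0 := by
  set FF := (Finset.range N).filter (fun i => κ.f i = μ.f i + 1) with hFFd
  set ET := (Finset.range N).filter (fun i => μ.f (i+1) + 1 ≤ κ.f i) with hETd
  set R := {ρ : IntPartition | InterF μ.f ρ.f ∧ VS ρ.f κ.f ∧ sizeF μ.f = sizeF ρ.f + p' ∧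
      sizeF κ.f = sizeF ρ.f + q'} with hRd
  have hFFmem : ∀ i, i ∈ FF ↔ (i < N ∧ κ.f i = μ.f i + 1) := by
    intro i; rw [hFFd, Finset.mem_filter, Finset.mem_range]
  have hETmem : ∀ i, i ∈ ET ↔ (i < N ∧ μ.f (i+1) + 1 ≤ κ.f i) := by
    intro i; rw [hETd, Finset.mem_filter, Finset.mem_range]
  -- the canonical T of a member of R
  have hpack : ∀ ρ ∈ R, FF ⊆ ((Finset.range N).filter (fun i => ρ.f i < κ.f i)) ∧
      ((Finset.range N).filter (fun i => ρ.f i < κ.f i)) ⊆ ET ∧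
      (∀ i, ρ.f i = κ.f i -
        (if i ∈ ((Finset.range N).filter (fun i => ρ.f i < κ.f i)) then 1 else 0)) ∧
      ((Finset.range N).filter (fun i => ρ.f i < κ.f i)).card = q' ∧
      sizeF μ.f + q' = sizeF κ.f + p' := by
    intro ρ hρ
    obtain ⟨h1, h2, h3, h4⟩ := hρ
    set T := (Finset.range N).filter (fun i => ρ.f i < κ.f i) with hTd
    have hTmem : ∀ i, i ∈ T ↔ (i < N ∧ ρ.f i < κ.f i) := by
      intro i; rw [hTd, Finset.mem_filter, Finset.mem_range]
    have hsub1 : FF ⊆ T := by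
      intro i hi
      rw [hFFmem] at hi
      rw [hTmem]
      have := (h1 i).1
      exact ⟨hi.1, by omega⟩
    have hsub2 : T ⊆ ET := by
      intro i hi
      rw [hTmem] at hi
      rw [hETmem]
      have := (h1 i).2
      exact ⟨hi.1, by omega⟩
    have hform : ∀ i, ρ.f i = κ.f i - (if i ∈ T then 1 else 0) := by
      intro i
      by_cases hiT : i ∈ T
      · rw [if_pos hiT]
        rw [hTmem] at hiT
        have := (h2 i).2
        omega
      · rw [if_neg hiT]
        rw [hTmem] at hiT
        push_neg at hiT
        by_cases hiN : i < N
        · have := (h2 i).1; have := hiT hiN; omega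
        · have := hkz i (by omega)
          have := (h2 i).1
          omega
    have hρz : ∀ n, N ≤ n → ρ.f n = 0 := by
      intro n hn
      have := (h2 n).1; have := hkz n hn; omega
    have hTN : T ⊆ Finset.range N := by
      intro i hi; rw [Finset.mem_range]; exact ((hTmem i).mp hi).1
    have hsum : ∑ i ∈ Finset.range N, (ρ.f i + (if i ∈ T then 1 else 0))
        = ∑ i ∈ Finset.range N, κ.f i := by
      apply Finset.sum_congr rfl
      intro i _
      have := hform i
      by_cases hiT : i ∈ T
      · rw [if_pos hiT] at *
        rw [hTmem] at hiT
        omega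
      · rw [if_neg hiT] at *
        omega
    rw [Finset.sum_add_distrib, sum_ite_card hTN] at hsum
    have hSk : sizeF κ.f = ∑ i ∈ Finset.range N, κ.f i := sizeF_eq_sum hkz
    have hSr : sizeF ρ.f = ∑ i ∈ Finset.range N, ρ.f i := sizeF_eq_sum hρz
    exact ⟨hsub1, hsub2, hform, by omega, by omega⟩
  by_cases hcond : sizeF μ.f + q' = sizeF κ.f + p' ∧ FF.card ≤ q'
  · obtain ⟨hcons, haq⟩ := hcond
    rw [if_pos ⟨hcons, haq⟩]
    set Ψ : IntPartition → Finset ℕ :=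
      fun ρ => ((Finset.range N).filter (fun i => ρ.f i < κ.f i)) \ FF with hΨd
    have himg : Ψ '' R = ↑(Finset.powersetCard (q' - FF.card) (ET \ FF)) := by
      ext S'
      simp only [Set.mem_image, Finset.coe_sort_coe, Finset.mem_coe,
        Finset.mem_powersetCard]
      constructor
      · rintro ⟨ρ, hρ, rfl⟩
        obtain ⟨hs1, hs2, hform, hcard, _⟩ := hpack ρ hρ
        constructor
        · exact Finset.sdiff_subset_sdiff hs2 (le_refl _)
        · rw [Finset.card_sdiff_of_subset hs1, hcard]
      · rintro ⟨hsub, hcard⟩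
        have hdisj : Disjoint S' FF := by
          rw [Finset.disjoint_left]
          intro i hi
          exact (Finset.mem_sdiff.mp (hsub hi)).2
        set T := S' ∪ FF with hTd
        have hTE : ∀ i ∈ T, μ.f (i+1) + 1 ≤ κ.f i := by
          intro i hi
          rcases Finset.mem_union.mp hi with h | h
          · exact ((hETmem i).mp (Finset.mem_sdiff.mp (hsub h)).1).2
          · have := ((hFFmem i).mp h).2
            have := μ.antitone i (i+1) (by omega)
            omega
        have hFT : ∀ i, κ.f i = μ.f i + 1 → i ∈ T := by
          intro i hi
          apply Finset.mem_union_right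
          rw [hFFmem]
          refine ⟨?_, hi⟩
          by_contra hc
          have := hkz i (by omega); omega
        obtain ⟨ρ, hform, hi1, hi2, hi3, hi4⟩ := rho_of_T κ μ N hkz hmz hG T hTE hFT
        have hTcard : T.card = q' := by
          rw [hTd, Finset.card_union_of_disjoint hdisj, hcard]
          omega
        have e1 : sizeF κ.f = sizeF ρ.f + q' := by omega
        have e2 : sizeF μ.f = sizeF ρ.f + p' := by omega
        have hmemρ : ρ ∈ R := ⟨hi1, hi2, e2, e1⟩
        refine ⟨ρ, hmemρ, ?_⟩
        have hTf : (Finset.range N).filter (fun i => ρ.f i < κ.f i) = T := by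
          ext i
          rw [Finset.mem_filter, Finset.mem_range]
          constructor
          · rintro ⟨hiN, hlt⟩
            have := hform i
            by_contra hc
            rw [if_neg hc] at this
            omega
          · intro hiT
            have h1 := hform i
            rw [if_pos hiT] at h1
            have h2 := hTE i hiT
            refine ⟨?_, by omega⟩
            by_contra hc
            have := hkz i (by omega); omega
        rw [hΨd]
        simp only []
        rw [hTf, hTd, Finset.union_sdiff_right,
          (Finset.sdiff_eq_self_iff_disjoint).mpr hdisj]
    have hinj : Set.InjOn Ψ R := by
      intro ρ hρ ρ' hρ' heq
      obtain ⟨hs1, _, hform, _, _⟩ := hpack ρ hρ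
      obtain ⟨hs1', _, hform', _, _⟩ := hpack ρ' hρ'
      have hTT : (Finset.range N).filter (fun i => ρ.f i < κ.f i)
          = (Finset.range N).filter (fun i => ρ'.f i < κ.f i) := by
        have e1 := Finset.sdiff_union_of_subset hs1
        have e2 := Finset.sdiff_union_of_subset hs1'
        rw [← e1, ← e2]
        rw [hΨd] at heq
        simp only [] at heq
        rw [heq]
      apply IntPartition.ext'
      funext i
      rw [hform i, hform' i, hTT]
    calc R.ncard = (Ψ '' R).ncard := (Set.ncard_image_of_injOn hinj).symm
    _ = (Finset.powersetCard (q' - FF.card) (ET \ FF)).card := by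
        rw [himg, Set.ncard_coe_finset]
    _ = ((ET \ FF).card).choose (q' - FF.card) := Finset.card_powersetCard _ _
  · rw [if_neg hcond]
    have hempty : R = ∅ := by
      rw [Set.eq_empty_iff_forall_notMem]
      intro ρ hρ
      obtain ⟨hs1, hs2, _, hcard, hcons⟩ := hpack ρ hρ
      exact hcond ⟨hcons, hcard ▸ Finset.card_le_card hs1⟩
    rw [hempty, Set.ncard_empty]

theorem mixedL (κ μ : IntPartition) (N : ℕ) (hkz : ∀ n, N ≤ n → κ.f n = 0)
    (hmz : ∀ n, N ≤ n → μ.f n = 0)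
    (hG : ∀ i, μ.f (i+1) ≤ κ.f i ∧ κ.f i ≤ μ.f i + 1) (p q : ℕ) :
    {ν : IntPartition | InterF ν.f κ.f ∧ VS μ.f ν.f ∧ sizeF ν.f = sizeF κ.f + p ∧
      sizeF ν.f = sizeF μ.f + q}.ncard =
    if sizeF μ.f + q = sizeF κ.f + p ∧
        ((Finset.range N).filter (fun i => κ.f i = μ.f i + 1)).card ≤ q then
      (((((Finset.range N).filter (fun i => μ.f (i+1) + 1 ≤ κ.f i)) \
        ((Finset.range N).filter (fun i => κ.f i = μ.f i + 1))).card) + 1).choose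
        (q - ((Finset.range N).filter (fun i => κ.f i = μ.f i + 1)).card)
    else 0 := by
  set FF := (Finset.range N).filter (fun i => κ.f i = μ.f i + 1) with hFFd
  set ET := (Finset.range N).filter (fun i => μ.f (i+1) + 1 ≤ κ.f i) with hETd
  set ES : Finset ℕ := insert 0 (ET.image (· + 1)) with hESd
  set L := {ν : IntPartition | InterF ν.f κ.f ∧ VS μ.f ν.f ∧ sizeF ν.f = sizeF κ.f + p ∧
      sizeF ν.f = sizeF μ.f + q} with hLd
  have hFFmem : ∀ i, i ∈ FF ↔ (i < N ∧ κ.f i = μ.f i + 1) := by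
    intro i; rw [hFFd, Finset.mem_filter, Finset.mem_range]
  have hETmem : ∀ i, i ∈ ET ↔ (i < N ∧ μ.f (i+1) + 1 ≤ κ.f i) := by
    intro i; rw [hETd, Finset.mem_filter, Finset.mem_range]
  have hES_succ : ∀ i, i + 1 ∈ ES → i ∈ ET := by
    intro i hi
    rw [hESd, Finset.mem_insert] at hi
    rcases hi with h | h
    · omega
    · obtain ⟨a, ha, hai⟩ := Finset.mem_image.mp h
      have : a = i := by omega
      rwa [← this]
  have hETES : ∀ i ∈ ET, i + 1 ∈ ES := by
    intro i hi
    rw [hESd, Finset.mem_insert]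
    exact Or.inr (Finset.mem_image.mpr ⟨i, hi, rfl⟩)
  have hFFET : FF ⊆ ET := by
    intro i hi
    rw [hFFmem] at hi
    rw [hETmem]
    have := μ.antitone i (i+1) (by omega)
    omega
  have hFFES : FF ⊆ ES := by
    intro i hi
    cases i with
    | zero => rw [hESd]; exact Finset.mem_insert_self 0 _
    | succ i =>
      apply hETES
      rw [hFFmem] at hi
      rw [hETmem]
      have h1 := κ.antitone i (i+1) (by omega)
      omega
  have hEScard : ES.card = ET.card + 1 := by
    rw [hESd, Finset.card_insert_of_notMem (by
      intro hc
      obtain ⟨a, _, ha⟩ := Finset.mem_image.mp hc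
      omega), Finset.card_image_of_injective _ (fun a b hab => by omega)]
  have hESFFcard : (ES \ FF).card = (ET \ FF).card + 1 := by
    rw [Finset.card_sdiff_of_subset hFFES, Finset.card_sdiff_of_subset hFFET, hEScard]
    have := Finset.card_le_card hFFET
    omega
  have hESrange : ES ⊆ Finset.range (N+1) := by
    intro i hi
    rw [Finset.mem_range]
    cases i with
    | zero => omega
    | succ i => have := (hETmem i).mp (hES_succ i hi); omega
  have hpack : ∀ ν ∈ L, FF ⊆ ((Finset.range (N+1)).filter (fun i => ν.f i = μ.f i + 1)) ∧
      ((Finset.range (N+1)).filter (fun i => ν.f i = μ.f i + 1)) ⊆ ES ∧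
      (∀ i, ν.f i = μ.f i +
        (if i ∈ ((Finset.range (N+1)).filter (fun i => ν.f i = μ.f i + 1)) then 1 else 0)) ∧
      ((Finset.range (N+1)).filter (fun i => ν.f i = μ.f i + 1)).card = q ∧
      sizeF μ.f + q = sizeF κ.f + p := by
    intro ν hν
    obtain ⟨h1, h2, h3, h4⟩ := hν
    set S := (Finset.range (N+1)).filter (fun i => ν.f i = μ.f i + 1) with hSd
    have hSmem : ∀ i, i ∈ S ↔ (i < N + 1 ∧ ν.f i = μ.f i + 1) := by
      intro i; rw [hSd, Finset.mem_filter, Finset.mem_range]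
    have hνz : ∀ n, N + 1 ≤ n → ν.f n = 0 := by
      intro n hn
      have e1 := (h1 (n-1)).2
      have e2 := hkz (n-1) (by omega)
      have e3 : n - 1 + 1 = n := by omega
      rw [e3] at e1
      omega
    have hsub1 : FF ⊆ S := by
      intro i hi
      rw [hFFmem] at hi
      rw [hSmem]
      have := (h1 i).1
      have := (h2 i).2
      omega
    have hsub2 : S ⊆ ES := by
      intro i hi
      rw [hSmem] at hi
      cases i with
      | zero => rw [hESd]; exact Finset.mem_insert_self 0 _
      | succ i =>
        apply hETES
        rw [hETmem]
        have := (h1 i).2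
        refine ⟨?_, by omega⟩
        by_contra hc
        have := hkz i (by omega)
        omega
    have hform : ∀ i, ν.f i = μ.f i + (if i ∈ S then 1 else 0) := by
      intro i
      by_cases hiS : i ∈ S
      · rw [if_pos hiS]
        exact ((hSmem i).mp hiS).2
      · rw [if_neg hiS]
        rw [hSmem] at hiS
        push_neg at hiS
        by_cases hiN : i < N + 1
        · have := (h2 i).1; have := (h2 i).2; have := hiS hiN; omega
        · have := hνz i (by omega)
          have := hmz i (by omega)
          omega
    have hSN : S ⊆ Finset.range (N+1) := by
      intro i hi; exact Finset.mem_filter.mp hi |>.1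
    have hsum : ∑ i ∈ Finset.range (N+1), ν.f i
        = ∑ i ∈ Finset.range (N+1), μ.f i
          + ∑ i ∈ Finset.range (N+1), (if i ∈ S then 1 else 0) := by
      rw [← Finset.sum_add_distrib]
      exact Finset.sum_congr rfl (fun i _ => hform i)
    rw [sum_ite_card hSN] at hsum
    have hSν : sizeF ν.f = ∑ i ∈ Finset.range (N+1), ν.f i := sizeF_eq_sum hνz
    have hSμ : sizeF μ.f = ∑ i ∈ Finset.range (N+1), μ.f i :=
      sizeF_eq_sum (fun n (hn : N+1 ≤ n) => hmz n (by omega))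
    exact ⟨hsub1, hsub2, hform, by omega, by omega⟩
  by_cases hcond : sizeF μ.f + q = sizeF κ.f + p ∧ FF.card ≤ q
  · obtain ⟨hcons, haq⟩ := hcond
    rw [if_pos ⟨hcons, haq⟩]
    set Ψ : IntPartition → Finset ℕ :=
      fun ν => ((Finset.range (N+1)).filter (fun i => ν.f i = μ.f i + 1)) \ FF with hΨd
    have himg : Ψ '' L = ↑(Finset.powersetCard (q - FF.card) (ES \ FF)) := by
      ext S'
      simp only [Set.mem_image, Finset.coe_sort_coe, Finset.mem_coe,
        Finset.mem_powersetCard]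
      constructor
      · rintro ⟨ν, hν, rfl⟩
        obtain ⟨hs1, hs2, hform, hcard, _⟩ := hpack ν hν
        exact ⟨Finset.sdiff_subset_sdiff hs2 (le_refl _), by
          rw [Finset.card_sdiff_of_subset hs1, hcard]⟩
      · rintro ⟨hsub, hcard⟩
        have hdisj : Disjoint S' FF := by
          rw [Finset.disjoint_left]
          intro i hi
          exact (Finset.mem_sdiff.mp (hsub hi)).2
        set S := S' ∪ FF with hSd
        have hSE : ∀ i : ℕ, i + 1 ∈ S → μ.f (i+1) + 1 ≤ κ.f i := by
          intro i hi
          rcases Finset.mem_union.mp hi with h | h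
          · exact ((hETmem i).mp (hES_succ i ((Finset.mem_sdiff.mp (hsub h)).1))).2
          · exact ((hETmem i).mp (hES_succ i (hFFES h))).2
        have hFS : ∀ i, κ.f i = μ.f i + 1 → i ∈ S := by
          intro i hi
          apply Finset.mem_union_right
          rw [hFFmem]
          refine ⟨?_, hi⟩
          by_contra hc
          have := hkz i (by omega); omega
        obtain ⟨ν, hform, hi1, hi2, hi3⟩ := nu_of_S κ μ N hkz hmz hG S hSE hFS
        have hScard : S.card = q := by
          rw [hSd, Finset.card_union_of_disjoint hdisj, hcard]
          omega
        have e1 : sizeF ν.f = sizeF μ.f + q := by omega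
        have e2 : sizeF ν.f = sizeF κ.f + p := by omega
        have hmemν : ν ∈ L := ⟨hi1, hi2, e2, e1⟩
        refine ⟨ν, hmemν, ?_⟩
        have hSrange : S ⊆ Finset.range (N+1) := by
          intro i hi
          rcases Finset.mem_union.mp hi with h | h
          · exact hESrange ((Finset.mem_sdiff.mp (hsub h)).1)
          · exact hESrange (hFFES h)
        have hSf : (Finset.range (N+1)).filter (fun i => ν.f i = μ.f i + 1) = S := by
          ext i
          rw [Finset.mem_filter]
          constructor
          · rintro ⟨hiN, heq⟩
            have := hform i
            by_contra hc
            rw [if_neg hc] at this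
            omega
          · intro hiS
            have h1 := hform i
            rw [if_pos hiS] at h1
            exact ⟨hSrange hiS, h1⟩
        rw [hΨd]
        simp only []
        rw [hSf, hSd, Finset.union_sdiff_right,
          (Finset.sdiff_eq_self_iff_disjoint).mpr hdisj]
    have hinj : Set.InjOn Ψ L := by
      intro ν hν ν' hν' heq
      obtain ⟨hs1, _, hform, _, _⟩ := hpack ν hν
      obtain ⟨hs1', _, hform', _, _⟩ := hpack ν' hν'
      have hSS : (Finset.range (N+1)).filter (fun i => ν.f i = μ.f i + 1)
          = (Finset.range (N+1)).filter (fun i => ν'.f i = μ.f i + 1) := by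
        have e1 := Finset.sdiff_union_of_subset hs1
        have e2 := Finset.sdiff_union_of_subset hs1'
        rw [← e1, ← e2]
        rw [hΨd] at heq
        simp only [] at heq
        rw [heq]
      apply IntPartition.ext'
      funext i
      rw [hform i, hform' i, hSS]
    calc L.ncard = (Ψ '' L).ncard := (Set.ncard_image_of_injOn hinj).symm
    _ = (Finset.powersetCard (q - FF.card) (ES \ FF)).card := by
        rw [himg, Set.ncard_coe_finset]
    _ = ((ES \ FF).card).choose (q - FF.card) := Finset.card_powersetCard _ _
    _ = ((ET \ FF).card + 1).choose (q - FF.card) := by rw [hESFFcard]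
  · rw [if_neg hcond]
    have hempty : L = ∅ := by
      rw [Set.eq_empty_iff_forall_notMem]
      intro ν hν
      obtain ⟨hs1, hs2, _, hcard, hcons⟩ := hpack ν hν
      exact hcond ⟨hcons, hcard ▸ Finset.card_le_card hs1⟩
    rw [hempty, Set.ncard_empty]

theorem mixedEx (κ μ : IntPartition) (N : ℕ) (hkz : ∀ n, N ≤ n → κ.f n = 0)
    (hmz : ∀ n, N ≤ n → μ.f n = 0)
    (hG : ∀ i, μ.f (i+1) ≤ κ.f i ∧ κ.f i ≤ μ.f i + 1) (q' : ℕ)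
    (h1 : ((Finset.range N).filter (fun i => κ.f i = μ.f i + 1)).card ≤ q')
    (h2 : q' - ((Finset.range N).filter (fun i => κ.f i = μ.f i + 1)).card ≤
      (((Finset.range N).filter (fun i => μ.f (i+1) + 1 ≤ κ.f i)) \
        ((Finset.range N).filter (fun i => κ.f i = μ.f i + 1))).card) :
    sizeF κ.f ≤ sizeF μ.f + q' := by
  set FF := (Finset.range N).filter (fun i => κ.f i = μ.f i + 1) with hFFd
  set ET := (Finset.range N).filter (fun i => μ.f (i+1) + 1 ≤ κ.f i) with hETd
  obtain ⟨S', hS'sub, hS'card⟩ := Finset.exists_subset_card_eq h2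
  have hdisj : Disjoint S' FF := by
    rw [Finset.disjoint_left]
    intro i hi
    exact (Finset.mem_sdiff.mp (hS'sub hi)).2
  set T := S' ∪ FF with hTd
  have hTE : ∀ i ∈ T, μ.f (i+1) + 1 ≤ κ.f i := by
    intro i hi
    rcases Finset.mem_union.mp hi with h | h
    · have := (Finset.mem_sdiff.mp (hS'sub h)).1
      rw [hETd, Finset.mem_filter] at this
      exact this.2
    · rw [hFFd, Finset.mem_filter] at h
      have := μ.antitone i (i+1) (by omega)
      omega
  have hFT : ∀ i, κ.f i = μ.f i + 1 → i ∈ T := by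
    intro i hi
    apply Finset.mem_union_right
    rw [hFFd, Finset.mem_filter, Finset.mem_range]
    refine ⟨?_, hi⟩
    by_contra hc
    have := hkz i (by omega); omega
  obtain ⟨ρ, hform, hi1, hi2, hi3, hi4⟩ := rho_of_T κ μ N hkz hmz hG T hTE hFT
  have hTcard : T.card = q' := by
    rw [hTd, Finset.card_union_of_disjoint hdisj, hS'card]
    omega
  omega

/-! ### Mixed-type core -/

theorem core_mixed (κ μ : IntPartition) (p q : ℕ) :
    {ν : IntPartition | InterF ν.f κ.f ∧ VS μ.f ν.f ∧ sizeF ν.f = sizeF κ.f + p ∧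
        sizeF ν.f = sizeF μ.f + q}.ncard =
      {ρ : IntPartition | InterF μ.f ρ.f ∧ VS ρ.f κ.f ∧ sizeF μ.f = sizeF ρ.f + p ∧
          sizeF κ.f = sizeF ρ.f + q}.ncard +
        (if p = 0 ∨ q = 0 then 0 else
          {ρ : IntPartition | InterF μ.f ρ.f ∧ VS ρ.f κ.f ∧ sizeF μ.f = sizeF ρ.f + (p-1) ∧
            sizeF κ.f = sizeF ρ.f + (q-1)}.ncard) := by
  by_cases hG : ∀ i, μ.f (i+1) ≤ κ.f i ∧ κ.f i ≤ μ.f i + 1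
  · obtain ⟨N₁, hN₁⟩ := κ.eventually_zero
    obtain ⟨N₂, hN₂⟩ := μ.eventually_zero
    set N := max N₁ N₂ with hN
    have hkz : ∀ n, N ≤ n → κ.f n = 0 := fun n hn => hN₁ n (by omega)
    have hmz : ∀ n, N ≤ n → μ.f n = 0 := fun n hn => hN₂ n (by omega)
    rw [mixedL κ μ N hkz hmz hG p q, mixedR κ μ N hkz hmz hG p q]
    by_cases hpq : p = 0 ∨ q = 0
    · rw [if_pos hpq]
      set a := ((Finset.range N).filter (fun i => κ.f i = μ.f i + 1)).card with had
      set t := (((Finset.range N).filter (fun i => μ.f (i+1) + 1 ≤ κ.f i)) \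
        ((Finset.range N).filter (fun i => κ.f i = μ.f i + 1))).card with htd
      by_cases hC : sizeF μ.f + q = sizeF κ.f + p ∧ a ≤ q
      · rw [if_pos hC, if_pos hC]
        obtain ⟨hC1, hC2⟩ := hC
        rcases hpq with hp | hq
        · by_cases hqa : q = a
          · have h0 : q - a = 0 := by omega
            rw [h0, Nat.choose_zero_right, Nat.choose_zero_right]
          · have hkey : ¬ (q - 1 - a ≤ t) := by
              intro hc
              have := mixedEx κ μ N hkz hmz hG (q-1) (by omega) hc
              omega
            have h0a : (t+1).choose (q-a) = 0 := Nat.choose_eq_zero_of_lt (by omega)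
            have h0b : t.choose (q-a) = 0 := Nat.choose_eq_zero_of_lt (by omega)
            omega
        · have h0 : q - a = 0 := by omega
          rw [h0, Nat.choose_zero_right, Nat.choose_zero_right]
      · rw [if_neg hC, if_neg hC]
    · rw [if_neg hpq, mixedR κ μ N hkz hmz hG (p-1) (q-1)]
      set a := ((Finset.range N).filter (fun i => κ.f i = μ.f i + 1)).card with had
      set t := (((Finset.range N).filter (fun i => μ.f (i+1) + 1 ≤ κ.f i)) \
        ((Finset.range N).filter (fun i => κ.f i = μ.f i + 1))).card with htd
      push_neg at hpq
      obtain ⟨hp0, hq0⟩ := hpq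
      by_cases hC1 : sizeF μ.f + q = sizeF κ.f + p
      · by_cases hC2 : a ≤ q
        · rw [if_pos ⟨hC1, hC2⟩, if_pos ⟨hC1, hC2⟩]
          by_cases hqa : q = a
          · rw [if_neg (by omega : ¬(sizeF μ.f + (q-1) = sizeF κ.f + (p-1) ∧ a ≤ q - 1))]
            have h0 : q - a = 0 := by omega
            rw [h0, Nat.choose_zero_right, Nat.choose_zero_right]
          · rw [if_pos ⟨by omega, by omega⟩]
            have h1 : q - a = (q - 1 - a) + 1 := by omega
            rw [h1, Nat.choose_succ_succ]
            simp only [Nat.succ_eq_add_one]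
            have h2 : q - 1 - a + 1 = q - a := by omega
            rw [h2]
            omega
        · rw [if_neg (by omega : ¬(sizeF μ.f + q = sizeF κ.f + p ∧ a ≤ q)),
            if_neg (by omega : ¬(sizeF μ.f + q = sizeF κ.f + p ∧ a ≤ q)),
            if_neg (by omega : ¬(sizeF μ.f + (q-1) = sizeF κ.f + (p-1) ∧ a ≤ q - 1))]
      · rw [if_neg (by omega : ¬(sizeF μ.f + q = sizeF κ.f + p ∧ a ≤ q)),
          if_neg (by omega : ¬(sizeF μ.f + q = sizeF κ.f + p ∧ a ≤ q)),
          if_neg (by omega : ¬(sizeF μ.f + (q-1) = sizeF κ.f + (p-1) ∧ a ≤ q - 1))]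
  · have hL0 : {ν : IntPartition | InterF ν.f κ.f ∧ VS μ.f ν.f ∧ sizeF ν.f = sizeF κ.f + p ∧
        sizeF ν.f = sizeF μ.f + q} = ∅ := by
      rw [Set.eq_empty_iff_forall_notMem]
      rintro ν ⟨h1, h2, _, _⟩
      apply hG
      intro i
      have := (h2 (i+1)).1
      have := (h1 i).2
      have := (h1 i).1
      have := (h2 i).2
      exact ⟨by omega, by omega⟩
    have hR0 : ∀ p' q' : ℕ, {ρ : IntPartition | InterF μ.f ρ.f ∧ VS ρ.f κ.f ∧
        sizeF μ.f = sizeF ρ.f + p' ∧ sizeF κ.f = sizeF ρ.f + q'} = ∅ := by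
      intro p' q'
      rw [Set.eq_empty_iff_forall_notMem]
      rintro ρ ⟨h1, h2, _, _⟩
      apply hG
      intro i
      have := (h1 i).2
      have := (h2 i).1
      have := (h2 i).2
      have := (h1 i).1
      exact ⟨by omega, by omega⟩
    rw [hL0, hR0 p q, hR0 (p-1) (q-1), Set.ncard_empty]
    simp

/-! ### Prec conversions -/

theorem prec_true (x y : IntPartition) : Prec true x y ↔ InterF y.f x.f := by simp [Prec]

theorem prec_false' (x y : IntPartition) :
    Prec false x y ↔ InterF (conjF y.f) (conjF x.f) := by simp [Prec]

theorem conjF_conjP_f (y : IntPartition) : conjF (conjP y).f = y.f := by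
  calc conjF (conjP y).f = (conjP (conjP y)).f := (conjP_f (conjP y)).symm
  _ = y.f := congrArg IntPartition.f (conjP_conjP y)

theorem prec_false_conj (x y : IntPartition) :
    Prec false x (conjP y) ↔ InterF y.f (conjP x).f := by
  rw [prec_false', conjF_conjP_f, conjP_f]

theorem prec_false_conj2 (x y : IntPartition) :
    Prec false (conjP x) y ↔ InterF (conjP y).f x.f := by
  rw [prec_false', conjF_conjP_f, conjP_f]

theorem prec_true_conj (x y : IntPartition) :
    Prec true x (conjP y) ↔ VS (conjP x).f y.f := by
  rw [← prec_false_iff, prec_true, prec_false', conjF_conjP_f, conjP_f]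

theorem prec_true_conj2 (x y : IntPartition) :
    Prec true (conjP x) y ↔ VS x.f (conjP y).f := by
  rw [← prec_false_iff, prec_true, prec_false', conjF_conjP_f, conjP_f]

/-- quasi-commutation of vertex operators,
`Γ_{a₁+}(x₁) Γ_{a₂-}(x₂) = z₁₂ Γ_{a₂-}(x₂) Γ_{a₁+}(x₁)` with `z₁₂ = (1-x₁x₂)⁻¹` if `a₁ = a₂`
and `z₁₂ = 1+x₁x₂` otherwise, stated as the equality of the coefficients of `x₁^p x₂^q` of the
matrix elements `⟨κ|·|μ⟩` of both sides (each coefficient is a count of intermediate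
partitions). -/
theorem stmt8 (a₁ a₂ : Bool) (κ μ : IntPartition) (p q : ℕ) :
    Set.ncard {ν : IntPartition | Prec a₁ κ ν ∧ Prec a₂ μ ν ∧
        sizeF ν.f = sizeF κ.f + p ∧ sizeF ν.f = sizeF μ.f + q} =
      (if a₁ = a₂ then
        ∑ j ∈ Finset.range (min p q + 1),
          Set.ncard {ρ : IntPartition | Prec a₁ ρ μ ∧ Prec a₂ ρ κ ∧
            sizeF μ.f = sizeF ρ.f + (p - j) ∧ sizeF κ.f = sizeF ρ.f + (q - j)}
      else
        Set.ncard {ρ : IntPartition | Prec a₁ ρ μ ∧ Prec a₂ ρ κ ∧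
            sizeF μ.f = sizeF ρ.f + p ∧ sizeF κ.f = sizeF ρ.f + q} +
          if p = 0 ∨ q = 0 then 0 else
            Set.ncard {ρ : IntPartition | Prec a₁ ρ μ ∧ Prec a₂ ρ κ ∧
              sizeF μ.f = sizeF ρ.f + (p - 1) ∧ sizeF κ.f = sizeF ρ.f + (q - 1)}) := by
  cases a₁ <;> cases a₂
  · -- false, false
    rw [if_pos rfl]
    have t1 : {ν : IntPartition | Prec false κ ν ∧ Prec false μ ν ∧
        sizeF ν.f = sizeF κ.f + p ∧ sizeF ν.f = sizeF μ.f + q}.ncard =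
        {ν : IntPartition | InterF ν.f (conjP κ).f ∧ InterF ν.f (conjP μ).f ∧
          sizeF ν.f = sizeF (conjP κ).f + p ∧ sizeF ν.f = sizeF (conjP μ).f + q}.ncard := by
      have h0 : {ν : IntPartition | Prec false κ ν ∧ Prec false μ ν ∧
          sizeF ν.f = sizeF κ.f + p ∧ sizeF ν.f = sizeF μ.f + q}.ncard =
          {ν : IntPartition | Prec false κ (conjP ν) ∧ Prec false μ (conjP ν) ∧
            sizeF (conjP ν).f = sizeF κ.f + p ∧ sizeF (conjP ν).f = sizeF μ.f + q}.ncard :=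
        ncard_conj_transport _
      rw [h0]
      congr 1
      ext ν
      simp only [Set.mem_setOf_eq]
      rw [prec_false_conj, prec_false_conj, sizeF_conjP ν, ← sizeF_conjP κ, ← sizeF_conjP μ]
    rw [t1, core_eq (conjP κ) (conjP μ) p q]
    apply Finset.sum_congr rfl
    intro j _
    have h0 : {ρ : IntPartition | Prec false ρ μ ∧ Prec false ρ κ ∧
        sizeF μ.f = sizeF ρ.f + (p - j) ∧ sizeF κ.f = sizeF ρ.f + (q - j)}.ncard =
        {ρ : IntPartition | Prec false (conjP ρ) μ ∧ Prec false (conjP ρ) κ ∧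
          sizeF μ.f = sizeF (conjP ρ).f + (p - j) ∧
          sizeF κ.f = sizeF (conjP ρ).f + (q - j)}.ncard :=
      ncard_conj_transport _
    rw [h0]
    congr 1
    ext ρ
    simp only [Set.mem_setOf_eq]
    rw [prec_false_conj2, prec_false_conj2, sizeF_conjP ρ, ← sizeF_conjP κ, ← sizeF_conjP μ]
  · -- false, true
    rw [if_neg (by decide)]
    have t1 : {ν : IntPartition | Prec false κ ν ∧ Prec true μ ν ∧
        sizeF ν.f = sizeF κ.f + p ∧ sizeF ν.f = sizeF μ.f + q}.ncard =
        {ν : IntPartition | InterF ν.f (conjP κ).f ∧ VS (conjP μ).f ν.f ∧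
          sizeF ν.f = sizeF (conjP κ).f + p ∧ sizeF ν.f = sizeF (conjP μ).f + q}.ncard := by
      have h0 : {ν : IntPartition | Prec false κ ν ∧ Prec true μ ν ∧
          sizeF ν.f = sizeF κ.f + p ∧ sizeF ν.f = sizeF μ.f + q}.ncard =
          {ν : IntPartition | Prec false κ (conjP ν) ∧ Prec true μ (conjP ν) ∧
            sizeF (conjP ν).f = sizeF κ.f + p ∧ sizeF (conjP ν).f = sizeF μ.f + q}.ncard :=
        ncard_conj_transport _
      rw [h0]
      congr 1
      ext ν
      simp only [Set.mem_setOf_eq]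
      rw [prec_false_conj, prec_true_conj, sizeF_conjP ν, ← sizeF_conjP κ, ← sizeF_conjP μ]
    have hA : {ρ : IntPartition | Prec false ρ μ ∧ Prec true ρ κ ∧
        sizeF μ.f = sizeF ρ.f + p ∧ sizeF κ.f = sizeF ρ.f + q}.ncard =
        {ρ : IntPartition | InterF (conjP μ).f ρ.f ∧ VS ρ.f (conjP κ).f ∧
          sizeF (conjP μ).f = sizeF ρ.f + p ∧ sizeF (conjP κ).f = sizeF ρ.f + q}.ncard := by
      have h0 : {ρ : IntPartition | Prec false ρ μ ∧ Prec true ρ κ ∧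
          sizeF μ.f = sizeF ρ.f + p ∧ sizeF κ.f = sizeF ρ.f + q}.ncard =
          {ρ : IntPartition | Prec false (conjP ρ) μ ∧ Prec true (conjP ρ) κ ∧
            sizeF μ.f = sizeF (conjP ρ).f + p ∧ sizeF κ.f = sizeF (conjP ρ).f + q}.ncard :=
        ncard_conj_transport _
      rw [h0]
      congr 1
      ext ρ
      simp only [Set.mem_setOf_eq]
      rw [prec_false_conj2, prec_true_conj2, sizeF_conjP ρ, ← sizeF_conjP κ, ← sizeF_conjP μ]
    have hB : {ρ : IntPartition | Prec false ρ μ ∧ Prec true ρ κ ∧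
        sizeF μ.f = sizeF ρ.f + (p-1) ∧ sizeF κ.f = sizeF ρ.f + (q-1)}.ncard =
        {ρ : IntPartition | InterF (conjP μ).f ρ.f ∧ VS ρ.f (conjP κ).f ∧
          sizeF (conjP μ).f = sizeF ρ.f + (p-1) ∧ sizeF (conjP κ).f = sizeF ρ.f + (q-1)}.ncard := by
      have h0 : {ρ : IntPartition | Prec false ρ μ ∧ Prec true ρ κ ∧
          sizeF μ.f = sizeF ρ.f + (p-1) ∧ sizeF κ.f = sizeF ρ.f + (q-1)}.ncard =
          {ρ : IntPartition | Prec false (conjP ρ) μ ∧ Prec true (conjP ρ) κ ∧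
            sizeF μ.f = sizeF (conjP ρ).f + (p-1) ∧
            sizeF κ.f = sizeF (conjP ρ).f + (q-1)}.ncard :=
        ncard_conj_transport _
      rw [h0]
      congr 1
      ext ρ
      simp only [Set.mem_setOf_eq]
      rw [prec_false_conj2, prec_true_conj2, sizeF_conjP ρ, ← sizeF_conjP κ, ← sizeF_conjP μ]
    rw [t1, core_mixed (conjP κ) (conjP μ) p q, hA, hB]
  · -- true, false
    rw [if_neg (by decide)]
    have e1 : {ν : IntPartition | Prec true κ ν ∧ Prec false μ ν ∧
        sizeF ν.f = sizeF κ.f + p ∧ sizeF ν.f = sizeF μ.f + q} =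
        {ν : IntPartition | InterF ν.f κ.f ∧ VS μ.f ν.f ∧
          sizeF ν.f = sizeF κ.f + p ∧ sizeF ν.f = sizeF μ.f + q} := by
      ext ν
      simp only [Set.mem_setOf_eq]
      rw [prec_true, prec_false_iff]
    have e2 : {ρ : IntPartition | Prec true ρ μ ∧ Prec false ρ κ ∧
        sizeF μ.f = sizeF ρ.f + p ∧ sizeF κ.f = sizeF ρ.f + q} =
        {ρ : IntPartition | InterF μ.f ρ.f ∧ VS ρ.f κ.f ∧
          sizeF μ.f = sizeF ρ.f + p ∧ sizeF κ.f = sizeF ρ.f + q} := by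
      ext ρ
      simp only [Set.mem_setOf_eq]
      rw [prec_true, prec_false_iff]
    have e3 : {ρ : IntPartition | Prec true ρ μ ∧ Prec false ρ κ ∧
        sizeF μ.f = sizeF ρ.f + (p-1) ∧ sizeF κ.f = sizeF ρ.f + (q-1)} =
        {ρ : IntPartition | InterF μ.f ρ.f ∧ VS ρ.f κ.f ∧
          sizeF μ.f = sizeF ρ.f + (p-1) ∧ sizeF κ.f = sizeF ρ.f + (q-1)} := by
      ext ρ
      simp only [Set.mem_setOf_eq]
      rw [prec_true, prec_false_iff]
    rw [e1, core_mixed κ μ p q, e2, e3]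
  · -- true, true
    rw [if_pos rfl]
    have e1 : {ν : IntPartition | Prec true κ ν ∧ Prec true μ ν ∧
        sizeF ν.f = sizeF κ.f + p ∧ sizeF ν.f = sizeF μ.f + q} =
        {ν : IntPartition | InterF ν.f κ.f ∧ InterF ν.f μ.f ∧
          sizeF ν.f = sizeF κ.f + p ∧ sizeF ν.f = sizeF μ.f + q} := by
      ext ν
      simp only [Set.mem_setOf_eq]
      rw [prec_true, prec_true]
    rw [e1, core_eq κ μ p q]
    apply Finset.sum_congr rfl
    intro j _
    congr 1
end
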